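/- For each X ∈ {L, KP, S}, Autf_X(Σ, e) = Autf_X^ω(Σ, e); that is, an automorphism σ ∈ Aut_e(Σ) satisfies c ≡^X_e σ(c) for every small tuple c of realizations of Σ if and only if it satisfies this for every countable tuple of realizations of Σ. -/

import Mathlib

/- Framework: relativized Lascar groups of a first-order theory over a
hyperimaginary, following "Relativized Galois groups of first order theories
over a hyperimaginary" by H. Lee and J. Lee. -/

open FirstOrder Cardinal Pointwise

universe u

namespace RelLascar

variable {L : FirstOrder.Language.{u, u}} {M : Type u} [L.Structure M]

/-- The group of automorphisms of the monster model `M`. -/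
instance : Group (M ≃[L] M) where
  mul f g := f.comp g
  one := FirstOrder.Language.Equiv.refl L M
  inv f := f.symm
  mul_assoc f g h := (FirstOrder.Language.Equiv.comp_assoc h g f).symm
  one_mul := FirstOrder.Language.Equiv.refl_comp
  mul_one := FirstOrder.Language.Equiv.comp_refl
  inv_mul_cancel := FirstOrder.Language.Equiv.symm_comp_self

/-- Automorphisms act on the monster model. -/
instance : MulAction (M ≃[L] M) M where
  smul f x := f x
  one_smul _ := rfl
  mul_smul _ _ _ := rfl

@[simp] theorem autSmul_def (f : M ≃[L] M) (x : M) : f • x = f x := rfl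

/-- The solution set in `M` of a set of formulas in variables `ι` with
parameters `prm : π → M`. -/
def SolSet {ι π : Type u} (p : Set (L.Formula (ι ⊕ π))) (prm : π → M) : Set (ι → M) :=
  {v | ∀ φ ∈ p, φ.Realize (Sum.elim v prm)}

/-- A set of `ι`-tuples is type-definable over the parameters `prm`. -/
def TypeDefinableOver {ι π : Type u} (prm : π → M) (X : Set (ι → M)) : Prop :=
  ∃ p : Set (L.Formula (ι ⊕ π)), X = SolSet p prm

/-- Two tuples have the same (complete) type over `∅`. -/
def SameTp {ι : Type u} (c d : ι → M) : Prop :=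
  ∀ φ : L.Formula ι, φ.Realize c ↔ φ.Realize d

/-- `M` is a monster model with degree of saturation and strong homogeneity `κ`:
`κ` is uncountable, tuples of size `< κ` with the same type are conjugate under an
automorphism, and every partial type in `< κ` variables over `< κ` parameters that
is finitely realized in `M` is realized in `M`.  ("Small" means of size `< κ`.) -/
def IsMonster (κ : Cardinal.{u}) (L : FirstOrder.Language.{u, u}) (M : Type u) [L.Structure M] : Prop :=
  ℵ₀ < κ ∧
  (∀ (ι : Type u) (c d : ι → M), #ι < κ → SameTp (L := L) (M := M) c d →
      ∃ f : M ≃[L] M, ∀ i, f (c i) = d i) ∧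
  (∀ (ι π : Type u) (prm : π → M) (p : Set (L.Formula (ι ⊕ π))), #ι < κ → #π < κ →
      (∀ q : Finset (L.Formula (ι ⊕ π)), ↑q ⊆ p →
        ∃ v : ι → M, ∀ φ ∈ (q : Set (L.Formula (ι ⊕ π))), φ.Realize (Sum.elim v prm)) →
      ∃ v : ι → M, v ∈ SolSet p prm)

variable (κ : Cardinal.{u})

section Hyperimaginary

/- The hyperimaginary `e = a_E`, where `E` is the `∅`-type-definable equivalence
relation defined by the set of formulas `pE` and `a : γ → M`. -/
variable {γ : Type u} (pE : Set (L.Formula (γ ⊕ γ))) (a : γ → M)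

/-- The relation defined by a set of formulas in variables `δ ⊕ δ` (with no
parameters); for `pE` this is the equivalence relation `E`. -/
def Frel {δ : Type u} (pF : Set (L.Formula (δ ⊕ δ))) (x y : δ → M) : Prop :=
  ∀ φ ∈ pF, φ.Realize (Sum.elim x y)

/-- The class of a tuple `x` under the relation defined by `pF`; for an
equivalence relation this is the hyperimaginary `x_F` (as a set of representatives). -/
def Fclass {δ : Type u} (pF : Set (L.Formula (δ ⊕ δ))) (x : δ → M) : Set (δ → M) :=
  {y | Frel pF x y}

/-- `Aut_e(𝔠)`: the subgroup of automorphisms fixing the hyperimaginary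
`e = a_E` setwise. -/
def AutE : Subgroup (M ≃[L] M) := MulAction.stabilizer (M ≃[L] M) (Fclass pE a)

/-- `Aut_e(𝔠)` as a group. -/
abbrev Ge := ↥(AutE pE a)

/-- The hyperimaginary `e` is definable over the tuple `t` (i.e. `e ∈ dcl(t)`):
every automorphism fixing `t` pointwise fixes `e`. -/
def eInDclTuple {ι : Type u} (t : ι → M) : Prop :=
  ∀ f : M ≃[L] M, (∀ i, f (t i) = t i) → f ∈ AutE pE a

/-- The set of elements of `Aut_e(𝔠)` fixing pointwise some small elementary
substructure (model) `N` with `e ∈ dcl(N)`. -/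
def modelFixers : Set (Ge pE a) :=
  {f | ∃ N : L.ElementarySubstructure M, #N < κ ∧
        (∀ g : M ≃[L] M, (∀ x ∈ N, g x = x) → g ∈ AutE pE a) ∧
        ∀ x ∈ N, (f : M ≃[L] M) x = x}

/-- `Autf_L(𝔠, e)`: the normal subgroup of `Aut_e(𝔠)` generated by the
pointwise stabilizers of small models `N` with `e ∈ dcl(N)`. -/
def AutfL : Subgroup (Ge pE a) := Subgroup.normalClosure (modelFixers κ pE a)

/-- `c ≡ᴸ_e d` : the tuples have the same Lascar strong type over `e`. -/
def LEq {ι : Type u} (c d : ι → M) : Prop := ∃ f ∈ AutfL κ pE a, f • c = d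

theorem LEq.refl {ι : Type u} (c : ι → M) : LEq κ pE a c c :=
  ⟨1, one_mem _, one_smul _ _⟩

theorem LEq.symm {ι : Type u} {c d : ι → M} (h : LEq κ pE a c d) : LEq κ pE a d c := by
  obtain ⟨f, hf, rfl⟩ := h
  exact ⟨f⁻¹, inv_mem hf, inv_smul_smul f c⟩

theorem LEq.trans {ι : Type u} {c d e : ι → M} (h1 : LEq κ pE a c d)
    (h2 : LEq κ pE a d e) : LEq κ pE a c e := by
  obtain ⟨f, hf, rfl⟩ := h1
  obtain ⟨g, hg, rfl⟩ := h2
  exact ⟨g * f, mul_mem hg hf, (mul_smul g f c).symm ▸ rfl⟩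

end Hyperimaginary

section Sigma

variable {γ : Type u} (pE : Set (L.Formula (γ ⊕ γ))) (a : γ → M)
variable {V β : Type u} {pS : Set (L.Formula (V ⊕ β))} {bp : β → M}

/-- The solution set `Σ(𝔠)` of the partial type `Σ` (given by formulas `pS` over
the parameters `bp`). -/
abbrev Sol (pS : Set (L.Formula (V ⊕ β))) (bp : β → M) : Set (V → M) := SolSet pS bp

/-- The type of realizations of `Σ`. -/
abbrev SolT (pS : Set (L.Formula (V ⊕ β))) (bp : β → M) := ↥(Sol pS bp)

variable (pS bp) in
/-- The partial type `Σ` is `e`-invariant. -/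
def SolInv : Prop := ∀ (g : Ge pE a) (v : V → M), v ∈ Sol pS bp → g • v ∈ Sol pS bp

/-- The restriction homomorphism `Aut_e(𝔠) → Perm(Σ(𝔠))`, `f ↦ f ↾ Σ(𝔠)`. -/
def resPerm (hInv : SolInv pE a pS bp) : Ge pE a →* Equiv.Perm (SolT pS bp) where
  toFun g :=
    { toFun := fun v => ⟨g • (v : V → M), hInv g v v.2⟩
      invFun := fun v => ⟨g⁻¹ • (v : V → M), hInv g⁻¹ v v.2⟩
      left_inv := fun v => Subtype.ext (inv_smul_smul g (v : V → M))
      right_inv := fun v => Subtype.ext (smul_inv_smul g (v : V → M)) }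
  map_one' := Equiv.ext fun v => Subtype.ext (one_smul (Ge pE a) (v : V → M))
  map_mul' g h := Equiv.ext fun v => Subtype.ext (mul_smul g h (v : V → M))

/-- `Aut_e(Σ) = {f ↾ Σ(𝔠) : f ∈ Aut_e(𝔠)}`, as a subgroup of the permutations of
`Σ(𝔠)`. -/
def AutES (hInv : SolInv pE a pS bp) : Subgroup (Equiv.Perm (SolT pS bp)) :=
  (resPerm pE a hInv).range

/-- `Aut_e(Σ)` as a group. -/
abbrev GS (hInv : SolInv pE a pS bp) := ↥(AutES pE a hInv)

/-- The restriction map `ξ : Aut_e(𝔠) → Aut_e(Σ)`. -/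
def toGS (hInv : SolInv pE a pS bp) : Ge pE a →* GS pE a hInv :=
  (resPerm pE a hInv).rangeRestrict

/-- A tuple of realizations of `Σ`, flattened to a tuple of elements of `M`. -/
def flat {ι : Type u} (c : ι → SolT pS bp) : ι × V → M := fun p => (c p.1 : V → M) p.2

theorem flat_toGS_smul (hInv : SolInv pE a pS bp) {ι : Type u} (g : Ge pE a)
    (c : ι → SolT pS bp) : flat ((toGS pE a hInv g) • c) = g • flat c := rfl

theorem flat_smul_of_res (hInv : SolInv pE a pS bp) {ι : Type u} {τ : GS pE a hInv}
    {g : Ge pE a} (hg : resPerm pE a hInv g = ↑τ) (c : ι → SolT pS bp) :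
    flat (τ • c) = g • flat c := by
  have : τ = toGS pE a hInv g := Subtype.ext hg.symm
  subst this
  rfl

/-- `Autf_L(Σ, e)`: the subgroup of `Aut_e(Σ)` consisting of those restricted
automorphisms `σ` such that every small tuple of realizations of `Σ` has the same
Lascar strong type over `e` as its image under `σ`. -/
def AutfLS (hInv : SolInv pE a pS bp) : Subgroup (GS pE a hInv) where
  carrier := {σ | ∀ (ι : Type u), #ι < κ → ∀ c : ι → SolT pS bp,
      LEq κ pE a (flat c) (flat (σ • c))}
  one_mem' := by
    intro ι _ c
    rw [one_smul]
    exact LEq.refl κ pE a _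
  mul_mem' := by
    intro σ τ hσ hτ ι hι c
    rw [mul_smul]
    exact LEq.trans κ pE a (hτ ι hι c) (hσ ι hι (τ • c))
  inv_mem' := by
    intro σ hσ ι hι c
    have h := hσ ι hι (σ⁻¹ • c)
    rw [smul_inv_smul] at h
    exact LEq.symm κ pE a h

theorem AutfLS_normal (hInv : SolInv pE a pS bp) : (AutfLS κ pE a hInv).Normal := by
  constructor
  intro σ hσ τ ι hι c
  obtain ⟨g, hg⟩ := τ.2
  have hginv : resPerm pE a hInv g⁻¹ = ↑τ⁻¹ := by
    rw [map_inv, hg]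
    rfl
  obtain ⟨f, hf, hfe⟩ := hσ ι hι (τ⁻¹ • c)
  refine ⟨g * f * g⁻¹, (Subgroup.normalClosure_normal).conj_mem f hf g, ?_⟩
  have h1 : flat (τ⁻¹ • c) = g⁻¹ • flat c := flat_smul_of_res pE a hInv hginv c
  have h2 : flat ((τ * σ * τ⁻¹) • c) = g • flat (σ • τ⁻¹ • c) := by
    rw [mul_smul, mul_smul]
    exact flat_smul_of_res pE a hInv hg _
  rw [h2, ← hfe, h1, ← mul_smul, ← mul_smul]

/-- The relativized Lascar group `Gal_L(Σ, e) = Aut_e(Σ) / Autf_L(Σ, e)`. -/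
def GalL (hInv : SolInv pE a pS bp) := GS pE a hInv ⧸ AutfLS κ pE a hInv

/-- The projection `π_b : Aut_e(Σ) → Gal_L(Σ, e)`. -/
def projb (hInv : SolInv pE a pS bp) : GS pE a hInv → GalL κ pE a hInv :=
  QuotientGroup.mk

/-- The projection `π_Σ : Aut_e(𝔠) → Gal_L(Σ, e)`. -/
def projS (hInv : SolInv pE a pS bp) : Ge pE a → GalL κ pE a hInv :=
  fun g => projb κ pE a hInv (toGS pE a hInv g)

/-- A Lascar tuple in `Σ` over `e`: a small tuple `b` of realizations of `Σ` such
that `Autf_L(Σ, e) = {σ ∈ Aut_e(Σ) : b ≡ᴸ_e σ(b)}`. -/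
def IsLascarTuple (hInv : SolInv pE a pS bp) {ιb : Type u} (b : ιb → SolT pS bp) : Prop :=
  #ιb < κ ∧ ∀ σ : GS pE a hInv,
    σ ∈ AutfLS κ pE a hInv ↔ LEq κ pE a (flat b) (flat (σ • b))

variable (pS bp) in
/-- `e ∈ dcl(Σ)`: there is a small tuple of realizations of `Σ` over which `e` is
definable. -/
def eInDclSigma : Prop :=
  ∃ (ι : Type u) (c : ι → SolT pS bp), #ι < κ ∧ eInDclTuple pE a (flat c)

/-- The complete type of the tuple `v` over the parameters `prm` (with both
indexed by `ι`): the set of formulas realized by `v` with parameters `prm`. -/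
def tpOver {ι : Type u} (prm v : ι → M) : Set (L.Formula (ι ⊕ ι)) :=
  {φ | φ.Realize (Sum.elim v prm)}

/-- The type space `S_b(b) = {tp(f(b)/b) : f ∈ Aut_e(𝔠)}` over a tuple `b` of
realizations of `Σ`. -/
def Sb {ιb : Type u} (b : ιb → SolT pS bp) :
    Set (Set (L.Formula ((ιb × V) ⊕ (ιb × V)))) :=
  Set.range fun g : Ge pE a => tpOver (flat b) (g • flat b)

/-- The logic topology on a set of types: the subspace topology induced from the
product topology on `Formula → Bool` via characteristic functions. -/
noncomputable def typeSetTop {F : Type u} (X : Set (Set F)) : TopologicalSpace ↥X :=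
  TopologicalSpace.induced
    (fun p (φ : F) => (p : Set F).boolIndicator φ) inferInstance

/-- The map `ν_b : S_b(b) → Gal_L(Σ, e)`, `tp(σ(b)/b) ↦ [σ]`. -/
noncomputable def nub (hInv : SolInv pE a pS bp) {ιb : Type u} (b : ιb → SolT pS bp) :
    ↥(Sb pE a b) → GalL κ pE a hInv :=
  fun p => projS κ pE a hInv (Set.mem_range.mp p.2).choose

/-- The topology `𝔱_b` on the relativized Lascar group `Gal_L(Σ, e)`: the quotient
topology induced by `ν_b` from the logic topology on `S_b(b)`. -/
noncomputable def galTopb (hInv : SolInv pE a pS bp) {ιb : Type u}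
    (b : ιb → SolT pS bp) : TopologicalSpace (GalL κ pE a hInv) :=
  (typeSetTop (Sb pE a b)).coinduced (nub κ pE a hInv b)

end Sigma

section GalT

variable {γ : Type u} (pE : Set (L.Formula (γ ⊕ γ))) (a : γ → M)

/-- The Lascar group `Gal_L(T, e) = Aut_e(𝔠) / Autf_L(𝔠, e)`. -/
def GalT := Ge pE a ⧸ AutfL κ pE a

/-- The projection `π : Aut_e(𝔠) → Gal_L(T, e)`. -/
def projT : Ge pE a → GalT κ pE a := QuotientGroup.mk

/-- The type space `S_N(N) = {tp(f(N)/N) : f ∈ Aut_e(𝔠)}` over a small model `N`. -/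
def SMod (N : L.ElementarySubstructure M) : Set (Set (L.Formula (↥N ⊕ ↥N))) :=
  Set.range fun g : Ge pE a =>
    tpOver (Subtype.val : ↥N → M) (g • (Subtype.val : ↥N → M))

/-- The map `ν : S_N(N) → Gal_L(T, e)`, `tp(f(N)/N) ↦ [f]`. -/
noncomputable def nuT (N : L.ElementarySubstructure M) :
    ↥(SMod pE a N) → GalT κ pE a :=
  fun p => projT κ pE a (Set.mem_range.mp p.2).choose

/-- The standard quotient topology on the Lascar group `Gal_L(T, e)` induced via
the type space over a small model `N` (with `e ∈ dcl(N)`). -/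
noncomputable def galTopT (N : L.ElementarySubstructure M) :
    TopologicalSpace (GalT κ pE a) :=
  (typeSetTop (SMod pE a N)).coinduced (nuT κ pE a N)

/-- `Autf_KP(𝔠, e)`: the preimage under `π` of the closure of the identity in
`Gal_L(T, e)`. -/
noncomputable def AutfKPset (N : L.ElementarySubstructure M) : Set (Ge pE a) :=
  projT κ pE a ⁻¹' (@closure _ (galTopT κ pE a N) {projT κ pE a 1})

/-- `Autf_S(𝔠, e)`: the preimage under `π` of the connected component of the
identity in `Gal_L(T, e)`. -/
noncomputable def AutfSset (N : L.ElementarySubstructure M) : Set (Ge pE a) :=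
  projT κ pE a ⁻¹' (@connectedComponent _ (galTopT κ pE a N) (projT κ pE a 1))

/-- `c ≡ᴷᴾ_e d` : the tuples have the same KP strong type over `e`. -/
def KPeq (N : L.ElementarySubstructure M) {ι : Type u} (c d : ι → M) : Prop :=
  ∃ f ∈ AutfKPset κ pE a N, f • c = d

/-- `c ≡ˢ_e d` : the tuples have the same Shelah strong type over `e`. -/
def Seq (N : L.ElementarySubstructure M) {ι : Type u} (c d : ι → M) : Prop :=
  ∃ f ∈ AutfSset κ pE a N, f • c = d

end GalT

section Relativized

variable {γ : Type u} (pE : Set (L.Formula (γ ⊕ γ))) (a : γ → M)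
variable {V β : Type u} {pS : Set (L.Formula (V ⊕ β))} {bp : β → M}

/-- `Autf_KP(Σ, e)`: the set of restricted automorphisms fixing the KP strong
type of every small tuple of realizations of `Σ`. -/
noncomputable def AutfKPSset (hInv : SolInv pE a pS bp) (N : L.ElementarySubstructure M) :
    Set (GS pE a hInv) :=
  {σ | ∀ (ι : Type u), #ι < κ → ∀ c : ι → SolT pS bp,
      KPeq κ pE a N (flat c) (flat (σ • c))}

/-- `Autf_S(Σ, e)`: the set of restricted automorphisms fixing the Shelah strong
type of every small tuple of realizations of `Σ`. -/
noncomputable def AutfSSset (hInv : SolInv pE a pS bp) (N : L.ElementarySubstructure M) :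
    Set (GS pE a hInv) :=
  {σ | ∀ (ι : Type u), #ι < κ → ∀ c : ι → SolT pS bp,
      Seq κ pE a N (flat c) (flat (σ • c))}

/-- The orbit under `Aut_e(𝔠)` of the hyperimaginary given by the class of `x`
under the relation defined by `pF` is small ("`x_F` is bounded over `e`"). -/
def BoundedClass {δ : Type u} (pF : Set (L.Formula (δ ⊕ δ))) (x : δ → M) : Prop :=
  #↥(Set.range fun g : Ge pE a => g • Fclass pF x) < κ

/-- The orbit under `Aut_e(𝔠)` of the hyperimaginary given by the class of `x` is
finite ("`x_F` is algebraic over `e`"). -/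
def FiniteClass {δ : Type u} (pF : Set (L.Formula (δ ⊕ δ))) (x : δ → M) : Prop :=
  (Set.range fun g : Ge pE a => g • Fclass pF x).Finite

/-- `f` fixes the hyperimaginary given by the class of `x` (setwise). -/
def FixesClass (f : Ge pE a) {δ : Type u} (pF : Set (L.Formula (δ ⊕ δ)))
    (x : δ → M) : Prop :=
  f • Fclass pF x = Fclass pF x

variable (pS bp) in
/-- `f` fixes every hyperimaginary that is bounded over `e` and has a
representative which is a small tuple of realizations of `Σ`, i.e. `f` fixes
`bdd(e) ∩ Σ` pointwise. -/
def fixesAllBddS (f : Ge pE a) : Prop :=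
  ∀ (ι : Type u) (pF : Set (L.Formula ((ι × V) ⊕ (ι × V)))) (c : ι → SolT pS bp),
    #ι < κ → Equivalence (Frel (M := M) pF) → BoundedClass κ pE a pF (flat c) →
    FixesClass pE a f pF (flat c)

variable (pS bp) in
/-- `f` fixes every hyperimaginary that is algebraic over `e` and has a
representative which is a small tuple of realizations of `Σ`, i.e. `f` fixes
`acl(e) ∩ Σ` pointwise. -/
def fixesAllAclS (f : Ge pE a) : Prop :=
  ∀ (ι : Type u) (pF : Set (L.Formula ((ι × V) ⊕ (ι × V)))) (c : ι → SolT pS bp),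
    #ι < κ → Equivalence (Frel (M := M) pF) → FiniteClass pE a pF (flat c) →
    FixesClass pE a f pF (flat c)

end Relativized


section More

variable {γ : Type u} (pE : Set (L.Formula (γ ⊕ γ))) (a : γ → M)
variable {V β : Type u} {pS : Set (L.Formula (V ⊕ β))} {bp : β → M}

theorem mem_AutfLS_iff (hInv : SolInv pE a pS bp) {σ : GS pE a hInv} :
    σ ∈ AutfLS κ pE a hInv ↔ ∀ (ι : Type u), #ι < κ → ∀ c : ι → SolT pS bp,
      LEq κ pE a (flat c) (flat (σ • c)) := Iff.rfl

theorem toGS_mem_autfLS (hInv : SolInv pE a pS bp) {f : Ge pE a}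
    (hf : f ∈ AutfL κ pE a) : toGS pE a hInv f ∈ AutfLS κ pE a hInv :=
  (mem_AutfLS_iff κ pE a hInv).mpr
    (fun ι _ c => ⟨f, hf, (flat_toGS_smul pE a hInv f c).symm⟩)

instance AutfL_normal : (AutfL κ pE a).Normal :=
  Subgroup.normalClosure_normal

/-- The group structure of the relativized Lascar group `Gal_L(Σ, e)`. -/
noncomputable def galLGroup (hInv : SolInv pE a pS bp) : Group (GalL κ pE a hInv) :=
  @QuotientGroup.Quotient.group _ _ (AutfLS κ pE a hInv) (AutfLS_normal κ pE a hInv)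

/-- The natural projection `ξ_L : Gal_L(T, e) → Gal_L(Σ, e)`. -/
noncomputable def xiL (hInv : SolInv pE a pS bp) : GalT κ pE a → GalL κ pE a hInv :=
  haveI := AutfLS_normal κ pE a hInv
  ⇑(QuotientGroup.map (AutfL κ pE a) (AutfLS κ pE a hInv) (toGS pE a hInv)
    (fun _ hf => Subgroup.mem_comap.mpr (toGS_mem_autfLS κ pE a hInv hf)))

/-- The orbit equivalence relation `≡ᴴ` of a set `H` of restricted automorphisms,
on tuples of realizations of `Σ`. -/
def orbEq {hInv : SolInv pE a pS bp} (H : Set (GS pE a hInv)) {ι : Type u}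
    (c d : ι → SolT pS bp) : Prop :=
  ∃ h ∈ H, h • c = d

end More


section OmegaProof

open FirstOrder.Language

variable {γ : Type u} (pE : Set (L.Formula (γ ⊕ γ))) (a : γ → M)
variable {V β : Type u} {pS : Set (L.Formula (V ⊕ β))} {bp : β → M}

/-! ### Basic realization lemmas -/

/-- Finite conjunction over a finset (the former `finInf`). -/
noncomputable def finInf {α β : Type*} {n : ℕ} (s : Finset β)
    (f : β → L.BoundedFormula α n) : L.BoundedFormula α n :=
  (s.toList.map f).foldr (· ⊓ ·) ⊤

theorem realize_finInf {M' : Type*} [L.Structure M'] {α β : Type*} {n : ℕ} (s : Finset β)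
    (f : β → L.BoundedFormula α n) (v : α → M') (v' : Fin n → M') :
    (finInf s f).Realize v v' ↔ ∀ b ∈ s, (f b).Realize v v' := by
  simp only [finInf, BoundedFormula.realize_foldr_inf, List.mem_map, Finset.mem_toList,
    forall_exists_index, and_imp, forall_apply_eq_imp_iff₂]

/-- Existential quantification along a map (the former `Formula.iExs`). -/
noncomputable def mapIExs {α β γ : Type*} [Finite γ] (φ : L.Formula β) (f : β → α ⊕ γ) :
    L.Formula α :=
  (φ.relabel f).iExs γ

theorem realize_mapIExs {M' : Type*} [L.Structure M'] {α β γ : Type*} [Finite γ]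
    {φ : L.Formula β} {f : β → α ⊕ γ} {v : α → M'} :
    (mapIExs φ f).Realize v ↔ ∃ i : γ → M', φ.Realize (fun a => Sum.elim v i (f a)) := by
  rw [mapIExs, Formula.realize_iExs]
  simp only [Formula.realize_relabel]
  rfl

theorem realize_comp_equiv {α : Type*} (g : M ≃[L] M) (φ : L.Formula α) (v : α → M) :
    φ.Realize (fun i => g (v i)) ↔ φ.Realize v := by
  have := g.toElementaryEmbedding.map_formula φ v
  simpa [Function.comp_def] using this

/-- Every formula is equivalent (in `M`) to a formula anchored on finitely many
coordinates. -/
theorem exists_anchor {α : Type u} (φ : L.Formula α) :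
    ∃ (m : ℕ) (ψ : L.Formula (Fin m)) (g : Fin m → α),
      ∀ v : α → M, φ.Realize v ↔ ψ.Realize (v ∘ g) := by
  classical
  have h : ↑φ.freeVarFinset ⊆ (↑φ.freeVarFinset : Set α) := subset_rfl
  set s : Set α := ↑φ.freeVarFinset with hs
  haveI : Fintype ↥s := by rw [hs]; exact FinsetCoe.fintype _
  obtain e : ↥s ≃ Fin (Fintype.card ↥s) := Fintype.equivFin ↥s
  refine ⟨Fintype.card ↥s,
    BoundedFormula.relabelEquiv e (φ.restrictFreeVar (Set.inclusion h)),
    Subtype.val ∘ e.symm, fun v => ?_⟩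
  have h1 : (φ.restrictFreeVar (Set.inclusion h)).Realize (v ∘ (Subtype.val : ↥s → α))
      (default : Fin 0 → M) ↔ φ.Realize v :=
    BoundedFormula.realize_restrictFreeVar' h
  have h2 : (BoundedFormula.relabelEquiv e
        (φ.restrictFreeVar (Set.inclusion h))).Realize
        ((v ∘ (Subtype.val ∘ e.symm))) (default : Fin 0 → M) ↔
      (φ.restrictFreeVar (Set.inclusion h)).Realize
        ((v ∘ (Subtype.val ∘ e.symm)) ∘ e) (default : Fin 0 → M) :=
    BoundedFormula.realize_relabelEquiv
  have h3 : ((v ∘ (Subtype.val ∘ e.symm)) ∘ e) = v ∘ (Subtype.val : ↥s → α) := by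
    funext u; simp
  rw [h3] at h2
  exact h1.symm.trans h2.symm

theorem sameTp_of_anchored {α : Type u} {c d : α → M}
    (h : ∀ (m : ℕ) (ψ : L.Formula (Fin m)) (g : Fin m → α),
      ψ.Realize (c ∘ g) → ψ.Realize (d ∘ g)) : SameTp (L := L) c d := by
  intro φ
  obtain ⟨m, ψ, g, hψ⟩ := exists_anchor (M := M) φ
  constructor
  · intro hc; exact (hψ d).mpr (h m ψ g ((hψ c).mp hc))
  · intro hd
    by_contra hc
    have h1 : ψ.not.Realize (c ∘ g) := by
      rw [Formula.realize_not]
      exact fun hh => hc ((hψ c).mpr hh)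
    have h2 := h m ψ.not g h1
    rw [Formula.realize_not] at h2
    exact h2 ((hψ d).mp hd)

theorem SameTp.symm' {α : Type u} {c d : α → M} (h : SameTp (L := L) c d) :
    SameTp (L := L) d c := fun φ => (h φ).symm

theorem SameTp.trans' {α : Type u} {c d e : α → M} (h1 : SameTp (L := L) c d)
    (h2 : SameTp (L := L) d e) : SameTp (L := L) c e := fun φ => (h1 φ).trans (h2 φ)

theorem sameTp_comp_equiv {α : Type u} (g : M ≃[L] M) (c : α → M) :
    SameTp (L := L) (fun i => g (c i)) c := fun φ => realize_comp_equiv g φ c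

/-! ### Cardinal helpers -/

theorem sum_lt_kappa (hκ : ℵ₀ < κ) {A B : Type u} (hA : #A < κ) (hB : #B < κ) :
    #(A ⊕ B) < κ := by
  rw [Cardinal.mk_sum]; simp only [Cardinal.lift_id]
  exact Cardinal.add_lt_of_lt hκ.le hA hB

theorem prod_lt_kappa (hκ : ℵ₀ < κ) {A B : Type u} (hA : #A < κ) (hB : #B < κ) :
    #(A × B) < κ := by
  rw [Cardinal.mk_prod]; simp only [Cardinal.lift_id]
  exact Cardinal.mul_lt_of_lt hκ.le hA hB

theorem countable_lt_kappa (hκ : ℵ₀ < κ) (A : Type u) [Countable A] : #A < κ :=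
  lt_of_le_of_lt Cardinal.mk_le_aleph0 hκ

theorem fin_prod_lt_kappa (hκ : ℵ₀ < κ) {A : Type u} (hA : #A < κ) (n : ℕ) :
    #(Fin n × A) < κ := by
  rw [Cardinal.mk_prod, Cardinal.mk_fintype, Fintype.card_fin]
  simp only [Cardinal.lift_natCast, Cardinal.lift_id']
  exact Cardinal.mul_lt_of_lt hκ.le (lt_trans (Cardinal.nat_lt_aleph0 n) hκ) hA

/-! ### Monster model wrappers -/

theorem Ge_smul_apply {A : Type u} (f : Ge pE a) (c : A → M) (i : A) :
    (f • c) i = (f : M ≃[L] M) (c i) := rfl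

theorem hom_of_sameTp (hM : IsMonster κ L M) {A : Type u} (hA : #A < κ) {c d : A → M}
    (h : SameTp (L := L) c d) : ∃ f : M ≃[L] M, ∀ i, f (c i) = d i :=
  hM.2.1 A c d hA h

theorem realize_partial_type (hM : IsMonster κ L M) {ι' π' : Type u} (prm : π' → M)
    (p : Set (L.Formula (ι' ⊕ π'))) (hι : #ι' < κ) (hπ : #π' < κ)
    (hfin : ∀ q : Finset (L.Formula (ι' ⊕ π')), ↑q ⊆ p →
        ∃ v : ι' → M, ∀ φ ∈ (q : Set (L.Formula (ι' ⊕ π'))), φ.Realize (Sum.elim v prm)) :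
    ∃ v : ι' → M, ∀ φ ∈ p, φ.Realize (Sum.elim v prm) :=
  hM.2.2 ι' π' prm p hι hπ hfin

/-! ### `Aut_e` lemmas -/

theorem equiv_apply_inv_apply (f : M ≃[L] M) (x : M) : f ((f⁻¹ : M ≃[L] M) x) = x :=
  congrArg (fun g : M ≃[L] M => g x) (mul_inv_cancel f)

theorem frel_comp_equiv {δ : Type u} (pF : Set (L.Formula (δ ⊕ δ))) (g : M ≃[L] M)
    {x y : δ → M} (h : Frel (M := M) pF x y) :
    Frel (M := M) pF (fun i => g (x i)) (fun i => g (y i)) := by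
  intro φ hφ
  have he : (Sum.elim (fun i => g (x i)) (fun i => g (y i))) =
      fun i => g (Sum.elim x y i) := by
    funext i; cases i <;> rfl
  rw [he, realize_comp_equiv]
  exact h φ hφ

theorem smul_Fclass {δ : Type u} (pF : Set (L.Formula (δ ⊕ δ))) (f : M ≃[L] M) (x : δ → M) :
    f • Fclass (M := M) pF x = Fclass pF (fun i => f (x i)) := by
  ext y
  rw [Set.mem_smul_set_iff_inv_smul_mem]
  show Frel pF x (f⁻¹ • y) ↔ Frel pF (fun i => f (x i)) y
  constructor
  · intro h
    have h2 := frel_comp_equiv pF f h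
    have he : (fun i => f ((f⁻¹ • y) i)) = y := by
      funext i
      show f ((f⁻¹ : M ≃[L] M) (y i)) = y i
      exact equiv_apply_inv_apply f (y i)
    rwa [he] at h2
  · intro h
    have h2 := frel_comp_equiv pF (f⁻¹ : M ≃[L] M) h
    have he1 : (fun i => (f⁻¹ : M ≃[L] M) (f (x i))) = x := by
      funext i
      have h3 := equiv_apply_inv_apply (f⁻¹ : M ≃[L] M) (x i)
      rwa [inv_inv] at h3
    have he2 : (fun i => (f⁻¹ : M ≃[L] M) (y i)) = f⁻¹ • y := rfl
    rw [he1, he2] at h2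
    exact h2

theorem mem_AutE_iff (hE : Equivalence (Frel (M := M) pE)) (f : M ≃[L] M) :
    f ∈ AutE pE a ↔ Frel (M := M) pE a (fun i => f (a i)) := by
  constructor
  · intro hf
    have ha : a ∈ Fclass (M := M) pE a := hE.refl a
    have h2 : f • a ∈ f • Fclass (M := M) pE a := Set.smul_mem_smul_set ha
    rw [MulAction.mem_stabilizer_iff.mp hf] at h2
    exact h2
  · intro h
    rw [AutE, MulAction.mem_stabilizer_iff, smul_Fclass]
    ext y
    show Frel pE (fun i => f (a i)) y ↔ Frel pE a y
    exact ⟨fun hy => hE.trans h hy, fun hy => hE.trans (hE.symm h) hy⟩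

theorem frel_of_mem_AutE (hE : Equivalence (Frel (M := M) pE)) (f : Ge pE a) :
    Frel (M := M) pE a (fun i => (f : M ≃[L] M) (a i)) :=
  (mem_AutE_iff pE a hE _).mp f.2

theorem equiv_inv_apply_apply (f : M ≃[L] M) (x : M) : (f⁻¹ : M ≃[L] M) (f x) = x := by
  have h := equiv_apply_inv_apply (f⁻¹ : M ≃[L] M) x
  rwa [inv_inv] at h

/-! ### The projection to the Lascar group, and `ν` -/

theorem mem_modelFixers (N : L.ElementarySubstructure M) (hN : #N < κ)
    (hNdcl : ∀ g : M ≃[L] M, (∀ x ∈ N, g x = x) → g ∈ AutE pE a)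
    (f : Ge pE a) (hf : ∀ x ∈ N, (f : M ≃[L] M) x = x) :
    f ∈ modelFixers κ pE a := ⟨N, hN, hNdcl, hf⟩

theorem projT_eq_of_tpOver (hM : IsMonster κ L M)
    (N : L.ElementarySubstructure M) (hN : #N < κ)
    (hNdcl : ∀ g : M ≃[L] M, (∀ x ∈ N, g x = x) → g ∈ AutE pE a)
    {f g : Ge pE a}
    (h : tpOver (L := L) (Subtype.val : ↥N → M) (f • (Subtype.val : ↥N → M)) =
      tpOver (Subtype.val : ↥N → M) (g • (Subtype.val : ↥N → M))) :
    projT κ pE a f = projT κ pE a g := by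
  set vN := (Subtype.val : ↥N → M) with hvN
  have hTp : SameTp (L := L) (Sum.elim (f • vN) vN) (Sum.elim (g • vN) vN) := by
    intro φ
    have h1 : φ.Realize (Sum.elim (f • vN) vN) ↔ φ ∈ tpOver (L := L) vN (f • vN) := Iff.rfl
    have h2 : φ.Realize (Sum.elim (g • vN) vN) ↔ φ ∈ tpOver (L := L) vN (g • vN) := Iff.rfl
    rw [h1, h2, h]
  obtain ⟨h₀, hh₀⟩ := hom_of_sameTp κ hM (sum_lt_kappa κ hM.1 hN hN) hTp
  have hfix : ∀ x ∈ N, h₀ x = x := fun x hx => hh₀ (Sum.inr ⟨x, hx⟩)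
  set hG : Ge pE a := ⟨h₀, hNdcl h₀ hfix⟩ with hhG
  have hmemh : hG ∈ AutfL κ pE a :=
    Subgroup.subset_normalClosure (mem_modelFixers κ pE a N hN hNdcl hG hfix)
  set k : Ge pE a := g⁻¹ * hG * f with hk
  have hfixk : ∀ x ∈ N, (k : M ≃[L] M) x = x := by
    intro x hx
    have h1 : h₀ ((f : M ≃[L] M) x) = (g : M ≃[L] M) x := hh₀ (Sum.inl ⟨x, hx⟩)
    have h2 : (k : M ≃[L] M) x = (↑g⁻¹ : M ≃[L] M) (h₀ ((f : M ≃[L] M) x)) := rfl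
    rw [h2, h1]
    have h3 : (↑g⁻¹ : M ≃[L] M) = ((g : M ≃[L] M))⁻¹ := rfl
    rw [h3]
    exact equiv_inv_apply_apply (g : M ≃[L] M) x
  have hmemk : k ∈ AutfL κ pE a :=
    Subgroup.subset_normalClosure (mem_modelFixers κ pE a N hN hNdcl k hfixk)
  have hdec : f⁻¹ * g = (f⁻¹ * hG * (f⁻¹)⁻¹) * k⁻¹ := by
    rw [hk]; group
  have hmem : f⁻¹ * g ∈ AutfL κ pE a := by
    rw [hdec]
    exact mul_mem ((AutfL_normal κ pE a).conj_mem hG hmemh f⁻¹) (inv_mem hmemk)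
  show (QuotientGroup.mk f : GalT κ pE a) = QuotientGroup.mk g
  exact (QuotientGroup.eq).mpr hmem

theorem nuT_eq_projT (hM : IsMonster κ L M)
    (N : L.ElementarySubstructure M) (hN : #N < κ)
    (hNdcl : ∀ g : M ≃[L] M, (∀ x ∈ N, g x = x) → g ∈ AutE pE a)
    (p : ↥(SMod pE a N)) (f : Ge pE a)
    (hp : (p : Set (L.Formula (↥N ⊕ ↥N))) =
      tpOver (L := L) (Subtype.val : ↥N → M) (f • (Subtype.val : ↥N → M))) :
    nuT κ pE a N p = projT κ pE a f := by
  have hc := (Set.mem_range.mp p.2).choose_spec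
  exact projT_eq_of_tpOver κ pE a hM N hN hNdcl (hc.trans hp)

/-! ### The key compactness lemma for closed conditions on the Lascar group -/

theorem keyClosed (hM : IsMonster κ L M)
    (hE : Equivalence (Frel (M := M) pE)) (hγ : #γ < κ) (hV : #V < κ)
    (hInv : SolInv pE a pS bp)
    (N : L.ElementarySubstructure M) (hN : #N < κ)
    (hNdcl : ∀ g : M ≃[L] M, (∀ x ∈ N, g x = x) → g ∈ AutE pE a)
    (C : Set (GalT κ pE a)) (hC : @IsClosed _ (galTopT κ pE a N) C)
    (σ : GS pE a hInv)
    (hcnt : ∀ (ι' : Type u), Countable ι' → ∀ c' : ι' → SolT pS bp,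
      ∃ f ∈ projT κ pE a ⁻¹' C, f • flat c' = flat (σ • c'))
    (ι : Type u) (hι : #ι < κ) (c : ι → SolT pS bp) :
    ∃ f ∈ projT κ pE a ⁻¹' C, f • flat c = flat (σ • c) := by
  classical
  set x : ι × V → M := flat c with hx
  set y : ι × V → M := flat (σ • c) with hy
  set vN : ↥N → M := (Subtype.val : ↥N → M) with hvN
  set F := L.Formula (↥N ⊕ ↥N) with hF
  set ind : ↥(SMod pE a N) → (F → Bool) :=
    (fun p (φ : F) => (p : Set F).boolIndicator φ) with hind
  set Z₀ : Set ↥(SMod pE a N) := nuT κ pE a N ⁻¹' C with hZ₀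
  have hZ₀closed : @IsClosed _ (typeSetTop (SMod pE a N)) Z₀ := by
    letI := typeSetTop (SMod pE a N)
    letI := galTopT κ pE a N
    have hcont : Continuous (nuT κ pE a N) := continuous_coinduced_rng
    exact hC.preimage hcont
  obtain ⟨Zb, hZbclosed, hZbpre⟩ :
      ∃ Zb : Set (F → Bool), IsClosed Zb ∧ ind ⁻¹' Zb = Z₀ :=
    isClosed_induced_iff.mp hZ₀closed
  -- the partial type
  let Vr := ↥N ⊕ γ
  let Pa := (ι × V) ⊕ ((ι × V) ⊕ (↥N ⊕ γ))
  set xside : (ι × V) ⊕ (↥N ⊕ γ) → M := Sum.elim x (Sum.elim vN a) with hxside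
  set prm : Pa → M := Sum.elim x (Sum.elim y (Sum.elim vN a)) with hprm
  set embT : (ι × V) ⊕ (↥N ⊕ γ) → Vr ⊕ Pa :=
    Sum.elim (fun iv => Sum.inr (Sum.inr (Sum.inl iv)))
      (Sum.elim (fun b => Sum.inl (Sum.inl b)) (fun cc => Sum.inl (Sum.inr cc))) with hembT
  set embP : ↥N ⊕ ↥N → Vr ⊕ Pa :=
    Sum.elim (fun b => Sum.inl (Sum.inl b))
      (fun b => Sum.inr (Sum.inr (Sum.inr (Sum.inl b)))) with hembP
  set embE : γ ⊕ γ → Vr ⊕ Pa :=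
    Sum.elim (fun cc => Sum.inr (Sum.inr (Sum.inr (Sum.inr cc))))
      (fun cc => Sum.inl (Sum.inr cc)) with hembE
  set lit : (F → Bool) → F → L.Formula (Vr ⊕ Pa) :=
    (fun bf φ => if bf φ then φ.relabel embP else (φ.relabel embP).not) with hlit
  set P1 : L.Formula (Vr ⊕ Pa) → Prop :=
    (fun χ => ∃ (m : ℕ) (ψ : L.Formula (Fin m)) (g : Fin m → (ι × V) ⊕ (↥N ⊕ γ)),
        ψ.Realize (xside ∘ g) ∧ χ = ψ.relabel (embT ∘ g)) with hP1
  set P2 : L.Formula (Vr ⊕ Pa) → Prop :=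
    (fun χ => ∃ (fs : Finset F) (bf : F → Bool),
        (∀ q' : ↥(SMod pE a N), q' ∈ Z₀ → ∃ φ ∈ fs, ind q' φ ≠ bf φ) ∧
        χ = (finInf fs (fun φ => lit bf φ)).not) with hP2
  set P3 : L.Formula (Vr ⊕ Pa) → Prop :=
    (fun χ => ∃ φ ∈ pE, χ = φ.relabel embE) with hP3
  set Γ : Set (L.Formula (Vr ⊕ Pa)) := {χ | P1 χ ∨ P2 χ ∨ P3 χ} with hΓ
  -- finite satisfiability
  have hfin : ∀ q : Finset (L.Formula (Vr ⊕ Pa)), ↑q ⊆ Γ →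
      ∃ v : Vr → M, ∀ φ ∈ (q : Set (L.Formula (Vr ⊕ Pa))), φ.Realize (Sum.elim v prm) := by
    intro q hq
    -- the finite set of `ι`-coordinates anchored by formulas of `q`
    set anch : L.Formula (Vr ⊕ Pa) → Finset ι := (fun χ =>
      if h : P1 χ then
        (Finset.univ : Finset (Fin h.choose)).biUnion (fun j =>
          match h.choose_spec.choose_spec.choose j with
          | Sum.inl iv => {iv.1}
          | Sum.inr _ => ∅)
      else ∅) with hanch
    set S : Finset ι := q.biUnion anch with hS
    haveI : Countable ↥(S : Set ι) := S.countable_toSet.to_subtype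
    obtain ⟨fΔ, hfΔC, hfΔe⟩ := hcnt ↥(S : Set ι) inferInstance (fun s => c s.1)
    have hfΔx : ∀ iv : ι × V, iv.1 ∈ S → (fΔ : M ≃[L] M) (x iv) = y iv := by
      intro iv hiv
      have h1 := congrFun hfΔe (⟨⟨iv.1, hiv⟩, iv.2⟩ : ↥(S : Set ι) × V)
      exact h1
    set zt : ↥N → M := fun b => (fΔ : M ≃[L] M) (vN b) with hzt
    set wt : γ → M := fun cc => (fΔ : M ≃[L] M) (a cc) with hwt
    have hztN : zt = fΔ • vN := rfl
    set pΔ : Set F := tpOver (L := L) vN (fΔ • vN) with hpΔ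
    have hpΔmem : pΔ ∈ SMod pE a N := ⟨fΔ, rfl⟩
    set ptΔ : ↥(SMod pE a N) := ⟨pΔ, hpΔmem⟩ with hptΔ
    have hptΔZ₀ : ptΔ ∈ Z₀ := by
      show nuT κ pE a N ptΔ ∈ C
      rw [nuT_eq_projT κ pE a hM N hN hNdcl ptΔ fΔ rfl]
      exact hfΔC
    refine ⟨Sum.elim zt wt, ?_⟩
    intro χ hχq
    rcases hq hχq with h1 | h2 | h3
    · -- anchored formulas
      set m := h1.choose with hm
      set ψ := h1.choose_spec.choose with hψd
      set g := h1.choose_spec.choose_spec.choose with hgd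
      obtain ⟨hrl, hχ⟩ := h1.choose_spec.choose_spec.choose_spec
      have hanchS : ∀ j : Fin m, ∀ iv : ι × V, g j = Sum.inl iv → iv.1 ∈ S := by
        intro j iv hj
        rw [hS]
        refine Finset.mem_biUnion.mpr ⟨χ, hχq, ?_⟩
        rw [hanch]
        simp only [dif_pos h1]
        rw [← hgd]
        refine Finset.mem_biUnion.mpr ⟨j, Finset.mem_univ j, ?_⟩
        rw [hj]
        exact Finset.mem_singleton_self iv.1
      rw [hχ, Formula.realize_relabel]
      have hA : (Sum.elim (Sum.elim zt wt) prm) ∘ (embT ∘ g) =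
          fun j => (fΔ : M ≃[L] M) ((xside ∘ g) j) := by
        funext j
        rcases hgj : g j with iv | bc
        · simp only [Function.comp_apply, hgj]
          show prm (Sum.inr (Sum.inl iv)) = (fΔ : M ≃[L] M) (xside (Sum.inl iv))
          show y iv = (fΔ : M ≃[L] M) (x iv)
          exact (hfΔx iv (hanchS j iv hgj)).symm
        · rcases bc with b | cc
          · simp only [Function.comp_apply, hgj]
            rfl
          · simp only [Function.comp_apply, hgj]
            rfl
      rw [hA, realize_comp_equiv]
      exact hrl
    · -- pattern formulas
      obtain ⟨fs, bf, hforb, hχ⟩ := h2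
      obtain ⟨φ₀, hφ₀fs, hφ₀ne⟩ := hforb ptΔ hptΔZ₀
      rw [hχ, Formula.realize_not]
      intro hall
      have hall' : (finInf fs (fun φ => lit bf φ)).Realize
          (Sum.elim (Sum.elim zt wt) prm) (default : Fin 0 → M) := hall
      have hφ₀ := (realize_finInf fs (fun φ => lit bf φ) _ _).mp hall' φ₀ hφ₀fs
      have hrelP : ((Sum.elim (Sum.elim zt wt) prm) ∘ embP) = Sum.elim (fΔ • vN) vN := by
        funext b
        rcases b with b | b
        · rfl
        · rfl
      by_cases hb : bf φ₀
      · have hφ₀' : Formula.Realize (L := L) (φ₀.relabel embP)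
            (Sum.elim (Sum.elim zt wt) prm) := by
          simp only [hlit] at hφ₀
          rw [if_pos hb] at hφ₀
          exact hφ₀
        rw [Formula.realize_relabel, hrelP] at hφ₀'
        have hmem2 : φ₀ ∈ pΔ := hφ₀'
        rw [Set.mem_iff_boolIndicator] at hmem2
        apply hφ₀ne
        show (pΔ.boolIndicator φ₀) = bf φ₀
        rw [hmem2, hb]
      · have hφ₀' : Formula.Realize (L := L) (φ₀.relabel embP).not
            (Sum.elim (Sum.elim zt wt) prm) := by
          simp only [hlit] at hφ₀
          rw [if_neg hb] at hφ₀
          exact hφ₀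
        rw [Formula.realize_not, Formula.realize_relabel, hrelP] at hφ₀'
        have hmem2 : φ₀ ∉ pΔ := hφ₀'
        rw [Set.notMem_iff_boolIndicator] at hmem2
        apply hφ₀ne
        show (pΔ.boolIndicator φ₀) = bf φ₀
        rw [hmem2]
        simp only [Bool.not_eq_true] at hb
        rw [hb]
    · -- the `E`-formulas
      obtain ⟨φ, hφpE, hχ⟩ := h3
      rw [hχ, Formula.realize_relabel]
      have hrelE : ((Sum.elim (Sum.elim zt wt) prm) ∘ embE) =
          Sum.elim a (fun i => (fΔ : M ≃[L] M) (a i)) := by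
        funext b
        rcases b with b | b
        · rfl
        · rfl
      rw [hrelE]
      exact frel_of_mem_AutE pE a hE fΔ φ hφpE
  -- realize the type
  have hVars : #(↥N ⊕ γ) < κ := sum_lt_kappa κ hM.1 hN hγ
  have hιV : #(ι × V) < κ := prod_lt_kappa κ hM.1 hι hV
  have hPa : #((ι × V) ⊕ ((ι × V) ⊕ (↥N ⊕ γ))) < κ :=
    sum_lt_kappa κ hM.1 hιV (sum_lt_kappa κ hM.1 hιV hVars)
  obtain ⟨zw, hzw⟩ := realize_partial_type κ hM prm Γ hVars hPa hfin
  set z : ↥N → M := fun b => zw (Sum.inl b) with hz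
  set w : γ → M := fun cc => zw (Sum.inr cc) with hw
  -- upgrade to full type equality
  set yside : (ι × V) ⊕ (↥N ⊕ γ) → M := Sum.elim y (Sum.elim z w) with hyside
  have helim : (Sum.elim zw prm) ∘ embT = yside := by
    funext b
    rcases b with iv | bc
    · rfl
    · rcases bc with b | cc
      · rfl
      · rfl
  have hTp : SameTp (L := L) xside yside := by
    apply sameTp_of_anchored
    intro m ψ g hreal
    have hmem : ψ.relabel (embT ∘ g) ∈ Γ := Or.inl ⟨m, ψ, g, hreal, rfl⟩
    have := hzw _ hmem
    rw [Formula.realize_relabel] at this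
    have hcd : (Sum.elim zw prm) ∘ (embT ∘ g) = yside ∘ g := by
      rw [← Function.comp_assoc, helim]
    rwa [hcd] at this
  obtain ⟨f₀, hf₀⟩ := hom_of_sameTp κ hM (sum_lt_kappa κ hM.1 hιV hVars) hTp
  have hf₀x : ∀ iv : ι × V, f₀ (x iv) = y iv := fun iv => hf₀ (Sum.inl iv)
  have hf₀N : ∀ b : ↥N, f₀ (vN b) = z b := fun b => hf₀ (Sum.inr (Sum.inl b))
  have hf₀a : ∀ cc : γ, f₀ (a cc) = w cc := fun cc => hf₀ (Sum.inr (Sum.inr cc))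
  -- `f₀` respects `e`
  have hfrel : Frel (M := M) pE a w := by
    intro φ hφ
    have hmem : φ.relabel embE ∈ Γ := Or.inr (Or.inr ⟨φ, hφ, rfl⟩)
    have := hzw _ hmem
    rw [Formula.realize_relabel] at this
    have hcd : (Sum.elim zw prm) ∘ embE = Sum.elim a w := by
      funext b
      rcases b with b | b
      · rfl
      · rfl
    rwa [hcd] at this
  have hf₀AutE : f₀ ∈ AutE pE a := by
    rw [mem_AutE_iff pE a hE]
    have : (fun i => f₀ (a i)) = w := funext hf₀a
    rw [this]
    exact hfrel
  set fGe : Ge pE a := ⟨f₀, hf₀AutE⟩ with hfGe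
  have hfGeN : fGe • vN = z := funext hf₀N
  set pt : ↥(SMod pE a N) := ⟨tpOver (L := L) vN z,
    ⟨fGe, show tpOver (L := L) vN (fGe • vN) = tpOver (L := L) vN z by rw [hfGeN]⟩⟩ with hpt
  -- the pattern conditions force `pt ∈ Z₀`
  have hptZ₀ : pt ∈ Z₀ := by
    have hptcl : ind pt ∈ closure (ind '' Z₀) := by
      rw [mem_closure_iff]
      intro o ho hmemo
      by_contra hne
      rw [Set.not_nonempty_iff_eq_empty] at hne
      obtain ⟨I, u, hIu, hpi⟩ := isOpen_pi_iff.mp ho (ind pt) hmemo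
      have hforb : ∀ q' : ↥(SMod pE a N), q' ∈ Z₀ → ∃ φ ∈ I, ind q' φ ≠ ind pt φ := by
        intro q' hq'
        by_contra hcon
        push_neg at hcon
        have hq'pi : ind q' ∈ (I : Set F).pi u := by
          intro φ hφ
          rw [hcon φ (Finset.mem_coe.mp hφ)]
          exact (hIu φ (Finset.mem_coe.mp hφ)).2
        have : ind q' ∈ o ∩ ind '' Z₀ := ⟨hpi hq'pi, Set.mem_image_of_mem ind hq'⟩
        rw [hne] at this
        exact this
      have hmem : (finInf I (fun φ => lit (ind pt) φ)).not ∈ Γ :=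
        Or.inr (Or.inl ⟨I, ind pt, hforb, rfl⟩)
      have hreal := hzw _ hmem
      rw [Formula.realize_not] at hreal
      apply hreal
      show (finInf I (fun φ => lit (ind pt) φ)).Realize (Sum.elim zw prm)
        (default : Fin 0 → M)
      rw [realize_finInf]
      intro φ hφ
      have hrelP : ((Sum.elim zw prm) ∘ embP) = Sum.elim z vN := by
        funext b
        rcases b with b | b
        · rfl
        · rfl
      have hgoal : Formula.Realize (L := L) (lit (ind pt) φ) (Sum.elim zw prm) := by
        by_cases hb : ind pt φ = true
        · simp only [hlit]
          rw [if_pos hb, Formula.realize_relabel, hrelP]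
          have hmem3 : φ ∈ tpOver (L := L) vN z := by
            have hb2 : ((pt : Set F).boolIndicator φ) = true := hb
            exact (Set.mem_iff_boolIndicator _ φ).mpr hb2
          exact hmem3
        · simp only [hlit]
          rw [if_neg hb, Formula.realize_not, Formula.realize_relabel, hrelP]
          have hmem3 : φ ∉ tpOver (L := L) vN z := by
            rw [Set.notMem_iff_boolIndicator]
            simp only [Bool.not_eq_true] at hb
            exact hb
          exact hmem3
      exact hgoal
    have himsub : ind '' Z₀ ⊆ Zb := by
      rw [← hZbpre]
      exact Set.image_preimage_subset ind Zb
    have : ind pt ∈ Zb := by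
      have h2 := closure_mono himsub hptcl
      rwa [hZbclosed.closure_eq] at h2
    rw [← hZbpre]
    exact this
  have hproj : projT κ pE a fGe ∈ C := by
    have := nuT_eq_projT κ pE a hM N hN hNdcl pt fGe (by rw [hfGeN])
    rw [← this]
    exact hptZ₀
  exact ⟨fGe, hproj, funext hf₀x⟩

/-! ### The Lascar one-step relation via copies of `N` -/

/-- One Lascar step: `x` and `y` have the same type over some conjugate copy of `N`
(respecting the hyperimaginary `e`). -/
def Step (N : L.ElementarySubstructure M) {J : Type u} (x y : J → M) : Prop :=
  ∃ (z : ↥N → M) (w : γ → M),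
    SameTp (L := L) (Sum.elim (Subtype.val : ↥N → M) a) (Sum.elim z w) ∧
    Frel (M := M) pE a w ∧
    ∀ ψ : L.Formula (J ⊕ ↥N), ψ.Realize (Sum.elim x z) ↔ ψ.Realize (Sum.elim y z)

/-- Chains of Lascar steps. -/
def StepChain (N : L.ElementarySubstructure M) {J : Type u} :
    ℕ → (J → M) → (J → M) → Prop
  | 0, x, y => x = y
  | (n+1), x, y => ∃ t, Step pE a N x t ∧ StepChain N n t y

theorem Step.refl' (hE : Equivalence (Frel (M := M) pE)) (N : L.ElementarySubstructure M)
    {J : Type u} (x : J → M) : Step pE a N x x :=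
  ⟨Subtype.val, a, fun _ => Iff.rfl, hE.refl a, fun _ => Iff.rfl⟩

theorem Step.symm' (N : L.ElementarySubstructure M) {J : Type u} {x y : J → M}
    (h : Step pE a N x y) : Step pE a N y x := by
  obtain ⟨z, w, h1, h2, h3⟩ := h
  exact ⟨z, w, h1, h2, fun ψ => (h3 ψ).symm⟩

theorem Step.smul' (hE : Equivalence (Frel (M := M) pE)) (N : L.ElementarySubstructure M)
    {J : Type u} {x y : J → M} (k : Ge pE a) (h : Step pE a N x y) :
    Step pE a N (k • x) (k • y) := by
  obtain ⟨z, w, h1, h2, h3⟩ := h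
  refine ⟨fun b => (k : M ≃[L] M) (z b), fun cc => (k : M ≃[L] M) (w cc), ?_, ?_, ?_⟩
  · have he : (Sum.elim (fun b => (k : M ≃[L] M) (z b)) (fun cc => (k : M ≃[L] M) (w cc))) =
        fun i => (k : M ≃[L] M) (Sum.elim z w i) := by
      funext i; rcases i with i | i <;> rfl
    rw [he]
    exact h1.trans' (sameTp_comp_equiv (k : M ≃[L] M) (Sum.elim z w)).symm'
  · have hkw := frel_comp_equiv pE (k : M ≃[L] M) h2
    exact hE.trans (frel_of_mem_AutE pE a hE k) hkw
  · intro ψ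
    have he1 : Sum.elim (k • x) (fun b => (k : M ≃[L] M) (z b)) =
        fun i => (k : M ≃[L] M) (Sum.elim x z i) := by
      funext i; rcases i with i | i <;> rfl
    have he2 : Sum.elim (k • y) (fun b => (k : M ≃[L] M) (z b)) =
        fun i => (k : M ≃[L] M) (Sum.elim y z i) := by
      funext i; rcases i with i | i <;> rfl
    rw [he1, he2, realize_comp_equiv, realize_comp_equiv]
    exact h3 ψ

theorem Step.comp' (N : L.ElementarySubstructure M) {J K : Type u} {x y : J → M}
    (r : K → J) (h : Step pE a N x y) : Step pE a N (x ∘ r) (y ∘ r) := by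
  obtain ⟨z, w, h1, h2, h3⟩ := h
  refine ⟨z, w, h1, h2, fun ψ => ?_⟩
  have he1 : Sum.elim (x ∘ r) z = (Sum.elim x z) ∘ (Sum.map r id) := by
    funext i; rcases i with i | i <;> rfl
  have he2 : Sum.elim (y ∘ r) z = (Sum.elim y z) ∘ (Sum.map r id) := by
    funext i; rcases i with i | i <;> rfl
  rw [he1, he2, ← Formula.realize_relabel, ← Formula.realize_relabel]
  exact h3 (ψ.relabel (Sum.map r id))

theorem StepChain.snoc' (N : L.ElementarySubstructure M) {J : Type u} :
    ∀ {n : ℕ} {x y z : J → M}, StepChain pE a N n x y → Step pE a N y z →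
      StepChain pE a N (n + 1) x z
  | 0, x, y, z, hc, hs => ⟨z, by rwa [show x = y from hc], rfl⟩
  | (n+1), x, y, z, hc, hs => by
      obtain ⟨t, h1, h2⟩ := hc
      exact ⟨t, h1, StepChain.snoc' N h2 hs⟩

theorem StepChain.mono' (hE : Equivalence (Frel (M := M) pE))
    (N : L.ElementarySubstructure M) {J : Type u} {n : ℕ} {x y : J → M}
    (hc : StepChain pE a N n x y) : StepChain pE a N (n + 1) x y :=
  StepChain.snoc' pE a N hc (Step.refl' pE a hE N y)

theorem StepChain.le_mono (hE : Equivalence (Frel (M := M) pE))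
    (N : L.ElementarySubstructure M) {J : Type u} {n n' : ℕ} (hn : n ≤ n') {x y : J → M}
    (hc : StepChain pE a N n x y) : StepChain pE a N n' x y := by
  induction hn with
  | refl => exact hc
  | step h ih => exact StepChain.mono' pE a hE N ih

theorem StepChain.concat' (N : L.ElementarySubstructure M) {J : Type u} :
    ∀ {m : ℕ} {n : ℕ} {x y z : J → M}, StepChain pE a N m x y → StepChain pE a N n y z →
      StepChain pE a N (m + n) x z
  | 0, n, x, y, z, hc, hc' => by rwa [show x = y from hc, Nat.zero_add]
  | (m+1), n, x, y, z, hc, hc' => by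
      obtain ⟨t, h1, h2⟩ := hc
      rw [Nat.succ_add]
      exact ⟨t, h1, StepChain.concat' N h2 hc'⟩

theorem StepChain.symm'' (N : L.ElementarySubstructure M) {J : Type u} :
    ∀ {n : ℕ} {x y : J → M}, StepChain pE a N n x y → StepChain pE a N n y x
  | 0, x, y, hc => (show x = y from hc).symm
  | (n+1), x, y, hc => by
      obtain ⟨t, h1, h2⟩ := hc
      exact StepChain.snoc' pE a N (StepChain.symm'' N h2) (Step.symm' pE a N h1)

theorem StepChain.smul'' (hE : Equivalence (Frel (M := M) pE))
    (N : L.ElementarySubstructure M) {J : Type u} (k : Ge pE a) :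
    ∀ {n : ℕ} {x y : J → M}, StepChain pE a N n x y →
      StepChain pE a N n (k • x) (k • y)
  | 0, x, y, hc => by rw [show x = y from hc]; rfl
  | (n+1), x, y, hc => by
      obtain ⟨t, h1, h2⟩ := hc
      exact ⟨k • t, Step.smul' pE a hE N k h1, StepChain.smul'' hE N k h2⟩

theorem StepChain.comp'' (N : L.ElementarySubstructure M) {J K : Type u} (r : K → J) :
    ∀ {n : ℕ} {x y : J → M}, StepChain pE a N n x y →
      StepChain pE a N n (x ∘ r) (y ∘ r)
  | 0, x, y, hc => by rw [show x = y from hc]; rfl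
  | (n+1), x, y, hc => by
      obtain ⟨t, h1, h2⟩ := hc
      exact ⟨t ∘ r, Step.comp' pE a N r h1, StepChain.comp'' N r h2⟩

theorem StepChain.points' (N : L.ElementarySubstructure M) {J : Type u} :
    ∀ {n : ℕ} {x y : J → M}, StepChain pE a N n x y →
      ∃ P : ℕ → J → M, P 0 = x ∧ P n = y ∧ ∀ k < n, Step pE a N (P k) (P (k+1))
  | 0, x, y, hc => ⟨fun _ => x, rfl, (show x = y from hc) ▸ rfl, fun k hk => absurd hk (by omega)⟩
  | (n+1), x, y, hc => by
      obtain ⟨t, h1, h2⟩ := hc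
      obtain ⟨P', hP0, hPn, hPs⟩ := StepChain.points' N h2
      refine ⟨fun k => match k with | 0 => x | (k+1) => P' k, rfl, hPn, ?_⟩
      intro k hk
      match k with
      | 0 => simpa [hP0] using h1
      | (k+1) => exact hPs k (by omega)

theorem stepChain_of_points (N : L.ElementarySubstructure M) {J : Type u} :
    ∀ (n : ℕ) (P : ℕ → J → M), (∀ k < n, Step pE a N (P k) (P (k+1))) →
      StepChain pE a N n (P 0) (P n)
  | 0, P, _ => rfl
  | (n+1), P, h =>
      StepChain.snoc' pE a N
        (stepChain_of_points N n P (fun k hk => h k (by omega))) (h n (by omega))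

/-! ### Coheir witnesses inside an elementary substructure -/

theorem coheir_witness (N : L.ElementarySubstructure M) (N' : L.ElementarySubstructure M)
    (A : Finset (↥N ⊕ ↥N')) (Θ : L.Formula ↥(A : Set (↥N ⊕ ↥N')))
    (hΘ : Θ.Realize ((Sum.elim (Subtype.val : ↥N → M) (Subtype.val : ↥N' → M)) ∘
      Subtype.val)) :
    ∃ z' : ↥N → M,
      Θ.Realize ((Sum.elim z' (Subtype.val : ↥N' → M)) ∘ Subtype.val) ∧
      ∀ b : ↥N, Sum.inl b ∈ A → z' b ∈ N' := by
  classical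
  set vN := (Subtype.val : ↥N → M) with hvN
  set vN' := (Subtype.val : ↥N' → M) with hvN'
  set fh : ↥(A : Set (↥N ⊕ ↥N')) → ↥N' ⊕ ↥(A : Set (↥N ⊕ ↥N')) :=
    (fun k => Sum.elim (fun _ => Sum.inr k) (fun n' => Sum.inl n') k.1) with hfh
  have h1 : (mapIExs Θ fh).Realize vN' := by
    rw [realize_mapIExs]
    refine ⟨fun k => Sum.elim vN vN' k.1, ?_⟩
    have he : (fun k : ↥(A : Set (↥N ⊕ ↥N')) =>
        Sum.elim vN' (fun k' : ↥(A : Set (↥N ⊕ ↥N')) => Sum.elim vN vN' k'.1) (fh k)) =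
        (Sum.elim vN vN') ∘ Subtype.val := by
      funext k
      rcases hk : k.1 with b | n'
      · simp only [hfh, hk, Sum.elim_inl, Sum.elim_inr, Function.comp_apply]
      · simp only [hfh, hk, Sum.elim_inl, Sum.elim_inr, Function.comp_apply]
    rw [he]
    exact hΘ
  have h2 : (mapIExs Θ fh).Realize (M := ↥N') (fun n' => n') := by
    have h3 := N'.subtype.map_formula (mapIExs Θ fh) (fun n' => n')
    rw [← h3]
    have he : (⇑N'.subtype ∘ (fun n' : ↥N' => n')) = vN' := by
      funext n'; rfl
    rwa [he]
  rw [realize_mapIExs] at h2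
  obtain ⟨i', hi'⟩ := h2
  have h4 := (N'.subtype.map_formula Θ
    (fun k => Sum.elim (fun n' : ↥N' => n') i' (fh k))).mpr hi'
  set z' : ↥N → M :=
    (fun b => if h : Sum.inl b ∈ A then (i' ⟨Sum.inl b, h⟩ : M) else vN b) with hz'
  refine ⟨z', ?_, ?_⟩
  · have he2 : (⇑N'.subtype ∘ fun k => Sum.elim (fun n' : ↥N' => n') i' (fh k)) =
        (Sum.elim z' vN') ∘ Subtype.val := by
      funext k
      rcases hk : k.1 with b | n'
      · have hbA : Sum.inl b ∈ A := by
          rw [← hk]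
          exact k.2
        have hkk : k = ⟨Sum.inl b, hbA⟩ := Subtype.ext hk
        simp only [hfh, hk, Sum.elim_inl, Sum.elim_inr, Function.comp_apply, hz']
        rw [dif_pos hbA, hkk]
        rfl
      · simp only [hfh, hk, Sum.elim_inl, Sum.elim_inr, Function.comp_apply]
        rfl
    rwa [he2] at h4
  · intro b hb
    show z' b ∈ N'
    rw [hz']
    simp only [dif_pos hb]
    exact (i' ⟨Sum.inl b, hb⟩).2

/-! ### A model fixer moves any small tuple one Lascar step -/

theorem step_of_modelFixer (hM : IsMonster κ L M) (hE : Equivalence (Frel (M := M) pE))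
    (N : L.ElementarySubstructure M) (hN : #N < κ)
    {mf : Ge pE a} (hmf : mf ∈ modelFixers κ pE a)
    {J : Type u} (hJ : #J < κ) (u : J → M) :
    Step pE a N u (mf • u) := by
  classical
  obtain ⟨N', hN', hdcl', hfix'⟩ := hmf
  set vN := (Subtype.val : ↥N → M) with hvN
  set vN' := (Subtype.val : ↥N' → M) with hvN'
  set mu : J → M := mf • u with hmu
  set prm : ↥N' ⊕ (J ⊕ J) → M := Sum.elim vN' (Sum.elim u mu) with hprm
  set embI : ↥N ⊕ ↥N' → ↥N ⊕ (↥N' ⊕ (J ⊕ J)) :=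
    Sum.elim (fun b => Sum.inl b) (fun b' => Sum.inr (Sum.inl b')) with hembI
  set embII₁ : J ⊕ ↥N → ↥N ⊕ (↥N' ⊕ (J ⊕ J)) :=
    Sum.elim (fun j => Sum.inr (Sum.inr (Sum.inl j))) (fun b => Sum.inl b) with hembII₁
  set embII₂ : J ⊕ ↥N → ↥N ⊕ (↥N' ⊕ (J ⊕ J)) :=
    Sum.elim (fun j => Sum.inr (Sum.inr (Sum.inr j))) (fun b => Sum.inl b) with hembII₂
  set P1 : L.Formula (↥N ⊕ (↥N' ⊕ (J ⊕ J))) → Prop := (fun χ =>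
    ∃ (mv : ℕ) (ψ : L.Formula (Fin mv)) (g : Fin mv → ↥N ⊕ ↥N'),
      ψ.Realize ((Sum.elim vN vN') ∘ g) ∧ χ = ψ.relabel (embI ∘ g)) with hP1
  set P2 : L.Formula (↥N ⊕ (↥N' ⊕ (J ⊕ J))) → Prop := (fun χ =>
    ∃ (mv : ℕ) (ψ : L.Formula (Fin mv)) (g : Fin mv → J ⊕ ↥N),
      χ = BoundedFormula.iff (ψ.relabel (embII₁ ∘ g)) (ψ.relabel (embII₂ ∘ g))) with hP2
  set Γ : Set (L.Formula (↥N ⊕ (↥N' ⊕ (J ⊕ J)))) := {χ | P1 χ ∨ P2 χ} with hΓ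
  have hfin : ∀ q : Finset (L.Formula (↥N ⊕ (↥N' ⊕ (J ⊕ J)))), ↑q ⊆ Γ →
      ∃ v : ↥N → M, ∀ φ ∈ (q : Set (L.Formula (↥N ⊕ (↥N' ⊕ (J ⊕ J))))),
        φ.Realize (Sum.elim v prm) := by
    intro q hq
    set anch : L.Formula (↥N ⊕ (↥N' ⊕ (J ⊕ J))) → Finset (↥N ⊕ ↥N') := (fun χ =>
      if h : P1 χ then Finset.univ.image h.choose_spec.choose_spec.choose
      else if h2 : P2 χ then
        Finset.univ.biUnion (fun j => match h2.choose_spec.choose_spec.choose j with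
          | Sum.inl _ => (∅ : Finset (↥N ⊕ ↥N'))
          | Sum.inr b => {Sum.inl b})
      else ∅) with hanch
    set A : Finset (↥N ⊕ ↥N') := q.biUnion anch with hA
    have hmemA : ∀ χ (h : P1 χ), χ ∈ q → ∀ j,
        h.choose_spec.choose_spec.choose j ∈ A := by
      intro χ h hχ j
      rw [hA]
      refine Finset.mem_biUnion.mpr ⟨χ, hχ, ?_⟩
      simp only [hanch]
      rw [dif_pos h]
      exact Finset.mem_image_of_mem _ (Finset.mem_univ j)
    set Θ : L.Formula ↥(A : Set (↥N ⊕ ↥N')) := finInf q.attach (fun χ =>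
      if h : P1 χ.1 then
        h.choose_spec.choose.relabel (fun j =>
          (⟨h.choose_spec.choose_spec.choose j,
            Finset.mem_coe.mpr (hmemA χ.1 h χ.2 j)⟩ : ↥(A : Set (↥N ⊕ ↥N'))))
      else ⊤) with hΘ
    have hΘreal : Θ.Realize ((Sum.elim vN vN') ∘ (Subtype.val : ↥(A : Set (↥N ⊕ ↥N')) → _)) := by
      show (finInf q.attach _).Realize _ (default : Fin 0 → M)
      rw [realize_finInf]
      intro χ _
      by_cases h : P1 χ.1
      · rw [dif_pos h]
        have hr := h.choose_spec.choose_spec.choose_spec.1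
        show Formula.Realize _ _
        rw [Formula.realize_relabel]
        exact hr
      · rw [dif_neg h]
        exact (BoundedFormula.realize_top).mpr trivial
    obtain ⟨z', hz'Θ, hz'mem⟩ := coheir_witness N N' A Θ hΘreal
    refine ⟨z', ?_⟩
    intro χ hχq
    by_cases h1 : P1 χ
    · have hχeq := h1.choose_spec.choose_spec.choose_spec.2
      have hΘχ : Formula.Realize (L := L)
          (h1.choose_spec.choose.relabel (fun j =>
            (⟨h1.choose_spec.choose_spec.choose j,
              Finset.mem_coe.mpr (hmemA χ h1 hχq j)⟩ : ↥(A : Set (↥N ⊕ ↥N')))))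
          ((Sum.elim z' vN') ∘ Subtype.val) := by
        have h6 : (finInf q.attach _).Realize
            ((Sum.elim z' vN') ∘ Subtype.val) (default : Fin 0 → M) := hz'Θ
        have h7 := (realize_finInf _ _ _ _).mp h6 ⟨χ, hχq⟩
          (Finset.mem_attach q ⟨χ, hχq⟩)
        rw [dif_pos h1] at h7
        exact h7
      rw [Formula.realize_relabel] at hΘχ
      rw [hχeq, Formula.realize_relabel]
      have he : (Sum.elim z' prm) ∘ (embI ∘ h1.choose_spec.choose_spec.choose) =
          ((Sum.elim z' vN') ∘ Subtype.val) ∘ (fun j =>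
            (⟨h1.choose_spec.choose_spec.choose j,
              Finset.mem_coe.mpr (hmemA χ h1 hχq j)⟩ : ↥(A : Set (↥N ⊕ ↥N')))) := by
        funext j
        rcases hgj : h1.choose_spec.choose_spec.choose j with b | b'
        · simp only [Function.comp_apply, hgj]
          rfl
        · simp only [Function.comp_apply, hgj]
          rfl
      rw [he]
      exact hΘχ
    · have h2 : P2 χ := (hq hχq).resolve_left h1
      have hχeq := h2.choose_spec.choose_spec.choose_spec
      set g := h2.choose_spec.choose_spec.choose with hg
      set ψ := h2.choose_spec.choose with hψ
      have hanchII : ∀ j b, g j = Sum.inr b → Sum.inl b ∈ A := by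
        intro j b hj
        rw [hA]
        refine Finset.mem_biUnion.mpr ⟨χ, hχq, ?_⟩
        simp only [hanch]
        rw [dif_neg h1, dif_pos h2, ← hg]
        refine Finset.mem_biUnion.mpr ⟨j, Finset.mem_univ j, ?_⟩
        rw [hj]
        exact Finset.mem_singleton_self _
      rw [hχeq]
      show (BoundedFormula.iff _ _).Realize _ (default : Fin 0 → M)
      rw [BoundedFormula.realize_iff]
      have hA₂ : ((Sum.elim z' prm) ∘ (embII₂ ∘ g)) =
          fun j => (mf : M ≃[L] M) (((Sum.elim z' prm) ∘ (embII₁ ∘ g)) j) := by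
        funext j
        rcases hgj : g j with jj | b
        · simp only [Function.comp_apply, hgj]
          rfl
        · simp only [Function.comp_apply, hgj]
          show z' b = (mf : M ≃[L] M) (z' b)
          exact (hfix' (z' b) (hz'mem b (hanchII j b hgj))).symm
      show (Formula.Realize _ _ ↔ Formula.Realize _ _)
      rw [Formula.realize_relabel, Formula.realize_relabel, hA₂, realize_comp_equiv]
  have hPa : #(↥N' ⊕ (J ⊕ J)) < κ :=
    sum_lt_kappa κ hM.1 hN' (sum_lt_kappa κ hM.1 hJ hJ)
  obtain ⟨z, hz⟩ := realize_partial_type κ hM prm Γ hN hPa hfin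
  have hTp' : SameTp (L := L) (Sum.elim vN vN') (Sum.elim z vN') := by
    apply sameTp_of_anchored
    intro mv ψ g hreal
    have hmem : ψ.relabel (embI ∘ g) ∈ Γ := Or.inl ⟨mv, ψ, g, hreal, rfl⟩
    have h5 := hz _ hmem
    rw [Formula.realize_relabel] at h5
    have he : (Sum.elim z prm) ∘ (embI ∘ g) = (Sum.elim z vN') ∘ g := by
      funext j
      rcases hgj : g j with b | b'
      · simp only [Function.comp_apply, hgj]; rfl
      · simp only [Function.comp_apply, hgj]; rfl
    rwa [he] at h5
  obtain ⟨h', hh'⟩ := hom_of_sameTp κ hM (sum_lt_kappa κ hM.1 hN hN') hTp'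
  have hfixN' : ∀ x ∈ N', h' x = x := fun x hx => hh' (Sum.inr ⟨x, hx⟩)
  have hh'AutE : h' ∈ AutE pE a := hdcl' h' hfixN'
  refine ⟨z, fun cc => h' (a cc), ?_, ?_, ?_⟩
  · have he : Sum.elim z (fun cc => h' (a cc)) = fun i => h' (Sum.elim vN a i) := by
      funext i
      rcases i with b | cc
      · exact (hh' (Sum.inl b)).symm
      · rfl
    rw [he]
    exact (sameTp_comp_equiv h' (Sum.elim vN a)).symm'
  · exact (mem_AutE_iff pE a hE h').mp hh'AutE
  · intro ψf
    obtain ⟨mψ, ψ, g, hψf⟩ := exists_anchor (M := M) ψf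
    rw [hψf _, hψf _]
    have hmem : BoundedFormula.iff (ψ.relabel (embII₁ ∘ g)) (ψ.relabel (embII₂ ∘ g)) ∈ Γ :=
      Or.inr ⟨mψ, ψ, g, rfl⟩
    have h5 := hz _ hmem
    have h5' : (BoundedFormula.iff (ψ.relabel (embII₁ ∘ g))
        (ψ.relabel (embII₂ ∘ g))).Realize (Sum.elim z prm) (default : Fin 0 → M) := h5
    rw [BoundedFormula.realize_iff] at h5'
    have h6 : (Formula.Realize (L := L) (ψ.relabel (embII₁ ∘ g)) (Sum.elim z prm) ↔
        Formula.Realize (L := L) (ψ.relabel (embII₂ ∘ g)) (Sum.elim z prm)) := h5'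
    rw [Formula.realize_relabel, Formula.realize_relabel] at h6
    have he1 : (Sum.elim z prm) ∘ (embII₁ ∘ g) = (Sum.elim u z) ∘ g := by
      funext j
      rcases hgj : g j with jj | b
      · simp only [Function.comp_apply, hgj]; rfl
      · simp only [Function.comp_apply, hgj]; rfl
    have he2 : (Sum.elim z prm) ∘ (embII₂ ∘ g) = (Sum.elim (mf • u) z) ∘ g := by
      funext j
      rcases hgj : g j with jj | b
      · simp only [Function.comp_apply, hgj]; rfl
      · simp only [Function.comp_apply, hgj]; rfl
    rwa [he1, he2] at h6

/-! ### Converting between Lascar steps and `Autf_L` -/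

theorem step_to_autfL (hM : IsMonster κ L M) (hE : Equivalence (Frel (M := M) pE))
    (hγ : #γ < κ) (N : L.ElementarySubstructure M) (hN : #N < κ)
    (hNdcl : ∀ g : M ≃[L] M, (∀ x ∈ N, g x = x) → g ∈ AutE pE a)
    {J : Type u} (hJ : #J < κ) {x y : J → M} (h : Step pE a N x y) :
    ∃ f ∈ AutfL κ pE a, f • x = y := by
  obtain ⟨z, w, hTp, hFrel, hψ⟩ := h
  obtain ⟨g0, hg0⟩ := hom_of_sameTp κ hM (sum_lt_kappa κ hM.1 hN hγ) hTp
  have hg0AutE : g0 ∈ AutE pE a := by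
    rw [mem_AutE_iff pE a hE]
    have he : (fun i => g0 (a i)) = w := funext (fun cc => hg0 (Sum.inr cc))
    rw [he]
    exact hFrel
  have hTp2 : SameTp (L := L) (Sum.elim x z) (Sum.elim y z) := hψ
  obtain ⟨h0, hh0⟩ := hom_of_sameTp κ hM (sum_lt_kappa κ hM.1 hJ hN) hTp2
  have hm0fix : ∀ xx ∈ N, ((g0⁻¹ * h0 * g0 : M ≃[L] M)) xx = xx := by
    intro xx hxx
    show g0⁻¹ (h0 (g0 xx)) = xx
    have h1 : g0 xx = z ⟨xx, hxx⟩ := hg0 (Sum.inl ⟨xx, hxx⟩)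
    have h2 : h0 (z ⟨xx, hxx⟩) = z ⟨xx, hxx⟩ := hh0 (Sum.inr ⟨xx, hxx⟩)
    rw [h1, h2, ← h1]
    exact equiv_inv_apply_apply g0 xx
  have hm0AutE : (g0⁻¹ * h0 * g0) ∈ AutE pE a := hNdcl _ hm0fix
  have hh0AutE : h0 ∈ AutE pE a := by
    have he : h0 = g0 * (g0⁻¹ * h0 * g0) * g0⁻¹ := by group
    rw [he]
    exact mul_mem (mul_mem hg0AutE hm0AutE) (inv_mem hg0AutE)
  set fG : Ge pE a := ⟨h0, hh0AutE⟩ with hfGd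
  set mG : Ge pE a := ⟨g0⁻¹ * h0 * g0, hm0AutE⟩ with hmGd
  set gG : Ge pE a := ⟨g0, hg0AutE⟩ with hgGd
  have hfG : fG = gG * mG * gG⁻¹ := by
    apply Subtype.ext
    show h0 = ((gG * mG * gG⁻¹ : Ge pE a) : M ≃[L] M)
    rw [Subgroup.coe_mul, Subgroup.coe_mul, Subgroup.coe_inv, hmGd, hgGd]
    show h0 = g0 * (g0⁻¹ * h0 * g0) * g0⁻¹
    group
  have hmGmem : mG ∈ AutfL κ pE a :=
    Subgroup.subset_normalClosure (mem_modelFixers κ pE a N hN hNdcl mG hm0fix)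
  have hfGmem : fG ∈ AutfL κ pE a := by
    rw [hfG]
    exact (AutfL_normal κ pE a).conj_mem mG hmGmem gG
  exact ⟨fG, hfGmem, funext (fun j => hh0 (Sum.inl j))⟩

theorem stepChain_to_autfL (hM : IsMonster κ L M) (hE : Equivalence (Frel (M := M) pE))
    (hγ : #γ < κ) (N : L.ElementarySubstructure M) (hN : #N < κ)
    (hNdcl : ∀ g : M ≃[L] M, (∀ x ∈ N, g x = x) → g ∈ AutE pE a)
    {J : Type u} (hJ : #J < κ) :
    ∀ {n : ℕ} {x y : J → M}, StepChain pE a N n x y →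
      ∃ f ∈ AutfL κ pE a, f • x = y := by
  intro n
  induction n with
  | zero =>
    intro x y hc
    exact ⟨1, one_mem _, by rw [one_smul]; exact hc⟩
  | succ n ih =>
    intro x y hc
    obtain ⟨t, h1, h2⟩ := hc
    obtain ⟨f1, hf1, hf1e⟩ := step_to_autfL κ pE a hM hE hγ N hN hNdcl hJ h1
    obtain ⟨f2, hf2, hf2e⟩ := ih h2
    refine ⟨f2 * f1, mul_mem hf2 hf1, ?_⟩
    rw [mul_smul, hf1e, hf2e]

theorem autfL_to_stepChain (hM : IsMonster κ L M) (hE : Equivalence (Frel (M := M) pE))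
    (N : L.ElementarySubstructure M) (hN : #N < κ)
    {f : Ge pE a} (hf : f ∈ AutfL κ pE a) :
    ∀ (J : Type u), #J < κ → ∀ u : J → M, ∃ n, StepChain pE a N n u (f • u) := by
  have hf' : f ∈ Subgroup.closure (Group.conjugatesOfSet (modelFixers κ pE a)) := hf
  refine Subgroup.closure_induction ?_ ?_ ?_ ?_ hf'
  · intro g hg
    rw [Group.mem_conjugatesOfSet_iff] at hg
    obtain ⟨mf, hmf, hconj⟩ := hg
    obtain ⟨cc, hcc⟩ := isConj_iff.mp hconj
    intro J hJ u
    refine ⟨1, ?_⟩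
    have hstep := step_of_modelFixer κ pE a hM hE N hN hmf hJ (cc⁻¹ • u)
    have hstep2 := Step.smul' pE a hE N cc hstep
    rw [smul_inv_smul] at hstep2
    have he : cc • mf • cc⁻¹ • u = g • u := by
      rw [← mul_smul, ← mul_smul, hcc]
    rw [he] at hstep2
    exact ⟨g • u, hstep2, rfl⟩
  · intro J hJ u
    exact ⟨0, (one_smul _ u).symm⟩
  · intro f1 f2 _ _ hPf1 hPf2 J hJ u
    obtain ⟨n1, h1⟩ := hPf2 J hJ u
    obtain ⟨n2, h2⟩ := hPf1 J hJ (f2 • u)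
    refine ⟨n1 + n2, ?_⟩
    rw [mul_smul]
    exact StepChain.concat' pE a N h1 h2
  · intro f1 _ hPf1 J hJ u
    obtain ⟨n, h⟩ := hPf1 J hJ (f1⁻¹ • u)
    refine ⟨n, ?_⟩
    have h2 := StepChain.symm'' pE a N h
    rwa [smul_inv_smul] at h2

theorem exists_lift_anchor {A A' B : Type u} {mv : ℕ} (r : A' → A) (g : Fin mv → A ⊕ B)
    (h : ∀ j iv, g j = Sum.inl iv → ∃ iv', r iv' = iv) :
    ∃ gh : Fin mv → A' ⊕ B, ∀ j, Sum.map r id (gh j) = g j := by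
  have hex : ∀ j, ∃ e : A' ⊕ B, Sum.map r id e = g j := by
    intro j
    rcases hj : g j with iv | b
    · obtain ⟨iv', hiv'⟩ := h j iv hj
      exact ⟨Sum.inl iv', by simp [hiv']⟩
    · exact ⟨Sum.inr b, rfl⟩
  choose gh hgh using hex
  exact ⟨gh, hgh⟩

/-! ### Compactness for chains of Lascar steps -/

theorem stepChain_compactness (hM : IsMonster κ L M)
    (hE : Equivalence (Frel (M := M) pE)) (hγ : #γ < κ) (hV : #V < κ)
    (N : L.ElementarySubstructure M) (hN : #N < κ)
    (ι : Type u) (hι : #ι < κ) (x y : ι × V → M) (n : ℕ)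
    (hfin : ∀ s : Finset ι, StepChain pE a N n
      (x ∘ (Prod.map (Subtype.val : ↥(s : Set ι) → ι) (id : V → V)))
      (y ∘ (Prod.map Subtype.val id))) :
    StepChain pE a N n x y := by
  classical
  set vN := (Subtype.val : ↥N → M) with hvN
  set Pa := (ι × V) ⊕ ((ι × V) ⊕ γ) with hPa
  set Vr := (Fin (n+1) × (ι × V)) ⊕ ((Fin n × ↥N) ⊕ (Fin n × γ)) with hVr
  set prm : Pa → M := Sum.elim x (Sum.elim y a) with hprm
  set embA : Fin n → (↥N ⊕ γ) → Vr ⊕ Pa := (fun k =>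
    Sum.elim (fun b => Sum.inl (Sum.inr (Sum.inl (k, b))))
      (fun cc => Sum.inl (Sum.inr (Sum.inr (k, cc))))) with hembA
  set embB : Fin n → (γ ⊕ γ) → Vr ⊕ Pa := (fun k =>
    Sum.elim (fun cc => Sum.inr (Sum.inr (Sum.inr cc)))
      (fun cc => Sum.inl (Sum.inr (Sum.inr (k, cc))))) with hembB
  set embC : Fin (n+1) → Fin n → ((ι × V) ⊕ ↥N) → Vr ⊕ Pa := (fun pt k =>
    Sum.elim (fun iv => Sum.inl (Sum.inl (pt, iv)))
      (fun b => Sum.inl (Sum.inr (Sum.inl (k, b))))) with hembC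
  set PE0 : L.Formula (Vr ⊕ Pa) → Prop := (fun χ => ∃ iv : ι × V,
    χ = (Term.var (Sum.inl (Sum.inl ((0 : Fin (n+1)), iv))) : L.Term (Vr ⊕ Pa)).equal
      (Term.var (Sum.inr (Sum.inl iv)))) with hPE0
  set PE1 : L.Formula (Vr ⊕ Pa) → Prop := (fun χ => ∃ iv : ι × V,
    χ = (Term.var (Sum.inl (Sum.inl (Fin.last n, iv))) : L.Term (Vr ⊕ Pa)).equal
      (Term.var (Sum.inr (Sum.inr (Sum.inl iv))))) with hPE1
  set PA : L.Formula (Vr ⊕ Pa) → Prop := (fun χ =>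
    ∃ (k : Fin n) (mv : ℕ) (ψ : L.Formula (Fin mv)) (g : Fin mv → ↥N ⊕ γ),
      ψ.Realize ((Sum.elim vN a) ∘ g) ∧ χ = ψ.relabel (embA k ∘ g)) with hPA
  set PB : L.Formula (Vr ⊕ Pa) → Prop := (fun χ =>
    ∃ (k : Fin n), ∃ φ ∈ pE, χ = φ.relabel (embB k)) with hPB
  set PC : L.Formula (Vr ⊕ Pa) → Prop := (fun χ =>
    ∃ (k : Fin n) (mv : ℕ) (ψ : L.Formula (Fin mv)) (g : Fin mv → (ι × V) ⊕ ↥N),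
      χ = BoundedFormula.iff (ψ.relabel (embC k.castSucc k ∘ g))
        (ψ.relabel (embC k.succ k ∘ g))) with hPC
  set Γ : Set (L.Formula (Vr ⊕ Pa)) := {χ | PE0 χ ∨ PE1 χ ∨ PA χ ∨ PB χ ∨ PC χ} with hΓ
  have hfinsat : ∀ q : Finset (L.Formula (Vr ⊕ Pa)), ↑q ⊆ Γ →
      ∃ v : Vr → M, ∀ φ ∈ (q : Set (L.Formula (Vr ⊕ Pa))), φ.Realize (Sum.elim v prm) := by
    intro q hq
    set anch : L.Formula (Vr ⊕ Pa) → Finset ι := (fun χ =>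
      if h : PE1 χ then {h.choose.1}
      else if h : PC χ then
        Finset.univ.biUnion (fun j =>
          match h.choose_spec.choose_spec.choose_spec.choose j with
          | Sum.inl iv => ({iv.1} : Finset ι)
          | Sum.inr _ => ∅)
      else ∅) with hanch
    set S : Finset ι := q.biUnion anch with hS
    set rS : (↥(S : Set ι) × V) → ι × V := Prod.map Subtype.val id with hrS
    obtain ⟨P', hP0, hPn, hPs⟩ := StepChain.points' pE a N (hfin S)
    -- extract step data
    have hstep : ∀ k : Fin n, Step pE a N (P' k.1) (P' (k.1 + 1)) := fun k => hPs k.1 k.2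
    set zt : Fin n → ↥N → M := fun k => (hstep k).choose with hzt
    set wt : Fin n → γ → M := fun k => (hstep k).choose_spec.choose with hwt
    have hstepd : ∀ k : Fin n,
        SameTp (L := L) (Sum.elim vN a) (Sum.elim (zt k) (wt k)) ∧
        Frel (M := M) pE a (wt k) ∧
        ∀ ψ : L.Formula ((↥(S : Set ι) × V) ⊕ ↥N),
          ψ.Realize (Sum.elim (P' k.1) (zt k)) ↔ ψ.Realize (Sum.elim (P' (k.1+1)) (zt k)) :=
      fun k => (hstep k).choose_spec.choose_spec
    set v : Vr → M := Sum.elim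
      (fun p : Fin (n+1) × (ι × V) =>
        if h : p.2.1 ∈ S then P' p.1.1 (⟨⟨p.2.1, h⟩, p.2.2⟩) else x p.2)
      (Sum.elim (fun p : Fin n × ↥N => zt p.1 p.2) (fun p : Fin n × γ => wt p.1 p.2)) with hv
    have hvals : ∀ (pt : Fin (n+1)) (iv' : ↥(S : Set ι) × V),
        v (Sum.inl (pt, rS iv')) = P' pt.1 iv' := by
      intro pt iv'
      show (if h : (rS iv').1 ∈ S then P' pt.1 (⟨⟨(rS iv').1, h⟩, (rS iv').2⟩) else x (rS iv'))
        = P' pt.1 iv'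
      have h1 : (rS iv').1 ∈ S := iv'.1.2
      rw [dif_pos h1]
      congr 1
    have hv0 : ∀ iv : ι × V, v (Sum.inl ((0 : Fin (n+1)), iv)) = x iv := by
      intro iv
      show (if h : iv.1 ∈ S then P' (0 : Fin (n+1)).1 (⟨⟨iv.1, h⟩, iv.2⟩) else x iv) = x iv
      by_cases h : iv.1 ∈ S
      · rw [dif_pos h]
        show P' 0 _ = x iv
        rw [hP0]
        rfl
      · rw [dif_neg h]
    refine ⟨v, ?_⟩
    intro χ hχq
    by_cases h0 : PE0 χ
    · obtain ⟨iv, hiv⟩ := h0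
      rw [hiv]
      have hre : ((Term.var (Sum.inl (Sum.inl ((0 : Fin (n+1)), iv))) : L.Term (Vr ⊕ Pa)).equal
          (Term.var (Sum.inr (Sum.inl iv)))).Realize (Sum.elim v prm) ↔
          ((Sum.elim v prm) (Sum.inl (Sum.inl ((0 : Fin (n+1)), iv))) =
            (Sum.elim v prm) (Sum.inr (Sum.inl iv))) := by
        rw [Formula.realize_equal]
        simp [Term.realize]
      rw [hre]
      show v (Sum.inl ((0 : Fin (n+1)), iv)) = x iv
      exact hv0 iv
    by_cases h1 : PE1 χ
    · have hiv := h1.choose_spec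
      set iv := h1.choose with hivd
      have hivS : iv.1 ∈ S := by
        rw [hS]
        refine Finset.mem_biUnion.mpr ⟨χ, hχq, ?_⟩
        simp only [hanch]
        rw [dif_pos h1]
        exact Finset.mem_singleton_self _
      rw [hiv]
      have hre : ((Term.var (Sum.inl (Sum.inl (Fin.last n, iv))) : L.Term (Vr ⊕ Pa)).equal
          (Term.var (Sum.inr (Sum.inr (Sum.inl iv))))).Realize (Sum.elim v prm) ↔
          ((Sum.elim v prm) (Sum.inl (Sum.inl (Fin.last n, iv))) =
            (Sum.elim v prm) (Sum.inr (Sum.inr (Sum.inl iv)))) := by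
        rw [Formula.realize_equal]
        simp [Term.realize]
      rw [hre]
      show v (Sum.inl (Fin.last n, iv)) = y iv
      have h2 : v (Sum.inl (Fin.last n, iv)) = P' (Fin.last n).1 (⟨⟨iv.1, hivS⟩, iv.2⟩) := by
        show (if h : iv.1 ∈ S then P' (Fin.last n).1 (⟨⟨iv.1, h⟩, iv.2⟩) else x iv) = _
        rw [dif_pos hivS]
      rw [h2]
      show P' n _ = y iv
      rw [hPn]
      rfl
    rcases ((hq hχq).resolve_left h0).resolve_left h1 with hA | hB | hC
    · obtain ⟨k, mv, ψ, g, hreal, hχ⟩ := hA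
      rw [hχ, Formula.realize_relabel]
      have he : (Sum.elim v prm) ∘ (embA k ∘ g) = (Sum.elim (zt k) (wt k)) ∘ g := by
        funext j
        rcases hgj : g j with b | cc
        · simp only [Function.comp_apply, hgj]
          rfl
        · simp only [Function.comp_apply, hgj]
          rfl
      rw [he, ← Formula.realize_relabel]
      have h3 := ((hstepd k).1 (ψ.relabel g)).mp
      rw [Formula.realize_relabel, Formula.realize_relabel] at h3
      rw [Formula.realize_relabel]
      exact h3 hreal
    · obtain ⟨k, φ, hφpE, hχ⟩ := hB
      rw [hχ, Formula.realize_relabel]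
      have he : (Sum.elim v prm) ∘ (embB k) = Sum.elim a (wt k) := by
        funext b
        rcases b with cc | cc
        · rfl
        · rfl
      rw [he]
      exact (hstepd k).2.1 φ hφpE
    · have hC : PC χ := hC
      set k := hC.choose with hkd
      set ψ := hC.choose_spec.choose_spec.choose with hψd
      set g := hC.choose_spec.choose_spec.choose_spec.choose with hgd
      have hχeq := hC.choose_spec.choose_spec.choose_spec.choose_spec
      have hanchPC : ∀ j iv, g j = Sum.inl iv → iv.1 ∈ S := by
        intro j iv hj
        rw [hS]
        refine Finset.mem_biUnion.mpr ⟨χ, hχq, ?_⟩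
        simp only [hanch]
        rw [dif_neg h1, dif_pos hC, ← hgd]
        refine Finset.mem_biUnion.mpr ⟨j, Finset.mem_univ j, ?_⟩
        rw [hj]
        exact Finset.mem_singleton_self _
      obtain ⟨gh, hgh⟩ := exists_lift_anchor (A := ι × V) (A' := ↥(S : Set ι) × V) (B := ↥N)
        rS g (fun j iv hj => ⟨(⟨⟨iv.1, Finset.mem_coe.mpr (hanchPC j iv hj)⟩, iv.2⟩), rfl⟩)
      have hassign : ∀ pt : Fin (n+1), (Sum.elim v prm) ∘ (embC pt k ∘ g) =
          (Sum.elim (P' pt.1) (zt k)) ∘ gh := by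
        intro pt
        funext j
        have hj := hgh j
        rcases hgj : gh j with iv' | b
        · rw [hgj] at hj
          simp only [Sum.map_inl] at hj
          simp only [Function.comp_apply, ← hj, hgj]
          show v (Sum.inl (pt, rS iv')) = (Sum.elim (P' pt.1) (zt k)) (Sum.inl iv')
          rw [hvals pt iv']
          rfl
        · rw [hgj] at hj
          simp only [Sum.map_inr, id] at hj
          simp only [Function.comp_apply, ← hj, hgj]
          rfl
      have hl : ∀ pt : Fin (n+1), (Formula.Realize (L := L)
          (ψ.relabel (embC pt k ∘ g)) (Sum.elim v prm)) ↔
          ψ.Realize ((Sum.elim (P' pt.1) (zt k)) ∘ gh) := by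
        intro pt
        rw [Formula.realize_relabel, hassign pt]
      have h4 := (hstepd k).2.2 (ψ.relabel gh)
      rw [Formula.realize_relabel, Formula.realize_relabel] at h4
      rw [hχeq]
      show (BoundedFormula.iff (ψ.relabel (embC k.castSucc k ∘ g))
        (ψ.relabel (embC k.succ k ∘ g))).Realize (Sum.elim v prm) (default : Fin 0 → M)
      rw [BoundedFormula.realize_iff]
      constructor
      · intro hr
        exact (hl k.succ).mpr (h4.mp ((hl k.castSucc).mp hr))
      · intro hr
        exact (hl k.castSucc).mpr (h4.mpr ((hl k.succ).mp hr))
  -- realize the chain type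
  have hιV : #(ι × V) < κ := prod_lt_kappa κ hM.1 hι hV
  have hVr : #((Fin (n+1) × (ι × V)) ⊕ ((Fin n × ↥N) ⊕ (Fin n × γ))) < κ :=
    sum_lt_kappa κ hM.1 (fin_prod_lt_kappa κ hM.1 hιV (n+1))
      (sum_lt_kappa κ hM.1 (fin_prod_lt_kappa κ hM.1 hN n)
        (fin_prod_lt_kappa κ hM.1 hγ n))
  have hPaκ : #((ι × V) ⊕ ((ι × V) ⊕ γ)) < κ :=
    sum_lt_kappa κ hM.1 hιV (sum_lt_kappa κ hM.1 hιV hγ)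
  obtain ⟨v, hv⟩ := realize_partial_type κ hM prm Γ hVr hPaκ hfinsat
  set U : Fin (n+1) → (ι × V) → M := fun k iv => v (Sum.inl (k, iv)) with hU
  set Z : Fin n → ↥N → M := fun k b => v (Sum.inr (Sum.inl (k, b))) with hZ
  set W : Fin n → γ → M := fun k cc => v (Sum.inr (Sum.inr (k, cc))) with hW
  have hU0 : U 0 = x := by
    funext iv
    have hmem : ((Term.var (Sum.inl (Sum.inl ((0 : Fin (n+1)), iv))) : L.Term (Vr ⊕ Pa)).equal
        (Term.var (Sum.inr (Sum.inl iv)))) ∈ Γ := Or.inl ⟨iv, rfl⟩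
    have h5 := hv _ hmem
    rw [Formula.realize_equal] at h5
    simp [Term.realize] at h5
    exact h5
  have hUn : U (Fin.last n) = y := by
    funext iv
    have hmem : ((Term.var (Sum.inl (Sum.inl (Fin.last n, iv))) : L.Term (Vr ⊕ Pa)).equal
        (Term.var (Sum.inr (Sum.inr (Sum.inl iv))))) ∈ Γ := Or.inr (Or.inl ⟨iv, rfl⟩)
    have h5 := hv _ hmem
    rw [Formula.realize_equal] at h5
    simp [Term.realize] at h5
    exact h5
  have hsteps : ∀ k : Fin n, Step pE a N (U k.castSucc) (U k.succ) := by
    intro k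
    refine ⟨Z k, W k, ?_, ?_, ?_⟩
    · apply sameTp_of_anchored
      intro mv ψ g hreal
      have hmem : ψ.relabel (embA k ∘ g) ∈ Γ :=
        Or.inr (Or.inr (Or.inl ⟨k, mv, ψ, g, hreal, rfl⟩))
      have h5 := hv _ hmem
      rw [Formula.realize_relabel] at h5
      have he : (Sum.elim v prm) ∘ (embA k ∘ g) = (Sum.elim (Z k) (W k)) ∘ g := by
        funext j
        rcases hgj : g j with b | cc
        · simp only [Function.comp_apply, hgj]; rfl
        · simp only [Function.comp_apply, hgj]; rfl
      rwa [he] at h5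
    · intro φ hφ
      have hmem : φ.relabel (embB k) ∈ Γ :=
        Or.inr (Or.inr (Or.inr (Or.inl ⟨k, φ, hφ, rfl⟩)))
      have h5 := hv _ hmem
      rw [Formula.realize_relabel] at h5
      have he : (Sum.elim v prm) ∘ (embB k) = Sum.elim a (W k) := by
        funext b
        rcases b with cc | cc
        · rfl
        · rfl
      rwa [he] at h5
    · intro ψf
      obtain ⟨mψ, ψ, g, hψf⟩ := exists_anchor (M := M) ψf
      rw [hψf _, hψf _]
      have hmem : BoundedFormula.iff (ψ.relabel (embC k.castSucc k ∘ g))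
          (ψ.relabel (embC k.succ k ∘ g)) ∈ Γ :=
        Or.inr (Or.inr (Or.inr (Or.inr ⟨k, mψ, ψ, g, rfl⟩)))
      have h5 := hv _ hmem
      have h5' : (BoundedFormula.iff (ψ.relabel (embC k.castSucc k ∘ g))
          (ψ.relabel (embC k.succ k ∘ g))).Realize (Sum.elim v prm)
          (default : Fin 0 → M) := h5
      rw [BoundedFormula.realize_iff] at h5'
      have h6 : (Formula.Realize (L := L) (ψ.relabel (embC k.castSucc k ∘ g))
          (Sum.elim v prm) ↔ Formula.Realize (L := L) (ψ.relabel (embC k.succ k ∘ g))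
          (Sum.elim v prm)) := h5'
      have hept : ∀ pt : Fin (n+1),
          (Sum.elim v prm) ∘ (embC pt k ∘ g) = (Sum.elim (U pt) (Z k)) ∘ g := by
        intro pt
        funext j
        rcases hgj : g j with iv | b
        · simp only [Function.comp_apply, hgj]; rfl
        · simp only [Function.comp_apply, hgj]; rfl
      rw [Formula.realize_relabel, Formula.realize_relabel, hept _, hept _] at h6
      exact h6
  set Pfull : ℕ → (ι × V) → M := fun k => if h : k < n+1 then U ⟨k, h⟩ else y with hPfull
  have hPc : ∀ k, k < n → Step pE a N (Pfull k) (Pfull (k+1)) := by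
    intro k hk
    have h1 : Pfull k = U ⟨k, by omega⟩ := by
      simp only [hPfull]; rw [dif_pos (by omega : k < n + 1)]
    have h2 : Pfull (k+1) = U ⟨k+1, by omega⟩ := by
      simp only [hPfull]; rw [dif_pos (by omega : k + 1 < n + 1)]
    rw [h1, h2]
    exact hsteps ⟨k, hk⟩
  have hchain := stepChain_of_points pE a N n Pfull hPc
  have hPf0 : Pfull 0 = x := by
    simp only [hPfull]
    rw [dif_pos (by omega : 0 < n + 1)]
    have he : (⟨0, by omega⟩ : Fin (n+1)) = 0 := by
      apply Fin.ext
      simp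
    rw [he, hU0]
  have hPfn : Pfull n = y := by
    simp only [hPfull]
    rw [dif_pos (by omega : n < n + 1)]
    have he : (⟨n, by omega⟩ : Fin (n+1)) = Fin.last n := by
      apply Fin.ext
      simp [Fin.last]
    rw [he, hUn]
  rwa [hPf0, hPfn] at hchain

/-! ### The main lemma for the Lascar case -/

theorem LEq_small (hM : IsMonster κ L M) (hE : Equivalence (Frel (M := M) pE))
    (hγ : #γ < κ) (hV : #V < κ) (hInv : SolInv pE a pS bp)
    (N : L.ElementarySubstructure M) (hN : #N < κ)
    (hNdcl : ∀ g : M ≃[L] M, (∀ x ∈ N, g x = x) → g ∈ AutE pE a)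
    (σ : GS pE a hInv)
    (hcnt : ∀ (ι' : Type u), Countable ι' → ∀ c' : ι' → SolT pS bp,
      LEq κ pE a (flat c') (flat (σ • c')))
    (ι : Type u) (hι : #ι < κ) (c : ι → SolT pS bp) :
    LEq κ pE a (flat c) (flat (σ • c)) := by
  classical
  set x : ι × V → M := flat c with hx
  set y : ι × V → M := flat (σ • c) with hy
  have huni : ∃ n, ∀ s : Finset ι, StepChain pE a N n
      (x ∘ (Prod.map (Subtype.val : ↥(s : Set ι) → ι) (id : V → V)))
      (y ∘ (Prod.map Subtype.val id)) := by
    by_contra hno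
    push_neg at hno
    choose sfun hsfun using hno
    set Uset : Set ι := ⋃ (nn : ℕ), ↑(sfun nn) with hUset
    haveI : Countable ↥Uset :=
      (Set.countable_iUnion (fun nn => (sfun nn).countable_toSet)).to_subtype
    obtain ⟨f, hfmem, hfe⟩ := hcnt ↥Uset inferInstance (fun i => c i.1)
    obtain ⟨n0, hch⟩ := autfL_to_stepChain κ pE a hM hE N hN hfmem (↥Uset × V)
      (prod_lt_kappa κ hM.1 (countable_lt_kappa κ hM.1 _) hV) (flat (fun i : ↥Uset => c i.1))
    rw [hfe] at hch
    have hsub : ∀ i : ↥(sfun n0 : Set ι), i.1 ∈ Uset := by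
      intro i
      rw [hUset]
      exact Set.mem_iUnion.mpr ⟨n0, i.2⟩
    set emb : (↥(sfun n0 : Set ι) × V) → (↥Uset × V) :=
      Prod.map (fun i => ⟨i.1, hsub i⟩) id with hemb
    have hres := StepChain.comp'' pE a N emb hch
    apply hsfun n0
    have he1 : (flat (fun i : ↥Uset => c i.1)) ∘ emb =
        x ∘ (Prod.map (Subtype.val : ↥(sfun n0 : Set ι) → ι) (id : V → V)) := rfl
    have he2 : (flat (σ • fun i : ↥Uset => c i.1)) ∘ emb =
        y ∘ (Prod.map Subtype.val id) := rfl
    rwa [he1, he2] at hres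
  obtain ⟨n, hn⟩ := huni
  have hchain : StepChain pE a N n x y :=
    stepChain_compactness κ pE a hM hE hγ hV N hN ι hι x y n hn
  obtain ⟨f, hf, hfe⟩ := stepChain_to_autfL κ pE a hM hE hγ N hN hNdcl
    (prod_lt_kappa κ hM.1 hι hV) hchain
  exact ⟨f, hf, hfe⟩

end OmegaProof

section Statements

variable {γ : Type u} (pE : Set (L.Formula (γ ⊕ γ))) (a : γ → M)
variable {V β : Type u} {pS : Set (L.Formula (V ⊕ β))} {bp : β → M}


/-- Fact 1.18: for each `X ∈ {L, KP, S}`,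
`Autf_X(Σ, e) = Autf_X^ω(Σ, e)`: a restricted automorphism fixes the `X`-strong
type of every small tuple of realizations of `Σ` iff it fixes the `X`-strong
type of every countable tuple of realizations of `Σ`. -/
theorem autfXS_eq_autfXS_omega (hM : IsMonster κ L M) (hγ : #γ < κ)
    (hE : Equivalence (Frel (M := M) pE)) (hV : #V < κ) (hβ : #β < κ)
    (hInv : SolInv pE a pS bp)
    (N : L.ElementarySubstructure M) (hN : #N < κ)
    (hNdcl : ∀ g : M ≃[L] M, (∀ x ∈ N, g x = x) → g ∈ AutE pE a) :
    (∀ σ : GS pE a hInv, σ ∈ AutfLS κ pE a hInv ↔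
        ∀ (ι : Type u), Countable ι → ∀ c : ι → SolT pS bp,
          LEq κ pE a (flat c) (flat (σ • c))) ∧
    (∀ σ : GS pE a hInv, σ ∈ AutfKPSset κ pE a hInv N ↔
        ∀ (ι : Type u), Countable ι → ∀ c : ι → SolT pS bp,
          KPeq κ pE a N (flat c) (flat (σ • c))) ∧
    (∀ σ : GS pE a hInv, σ ∈ AutfSSset κ pE a hInv N ↔
        ∀ (ι : Type u), Countable ι → ∀ c : ι → SolT pS bp,
          Seq κ pE a N (flat c) (flat (σ • c))) := by
  refine ⟨?_, ?_, ?_⟩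
  · intro σ
    rw [mem_AutfLS_iff]
    constructor
    · intro hσ ι' hc c'
      haveI := hc
      exact hσ ι' (countable_lt_kappa κ hM.1 ι') c'
    · intro hcnt ι' hι' c'
      exact LEq_small κ pE a hM hE hγ hV hInv N hN hNdcl σ hcnt ι' hι' c'
  · intro σ
    constructor
    · intro hσ ι' hc c'
      haveI := hc
      exact hσ ι' (countable_lt_kappa κ hM.1 ι') c'
    · intro hcnt ι' hι' c'
      have hclosed : @IsClosed _ (galTopT κ pE a N)
          (@closure _ (galTopT κ pE a N) {projT κ pE a 1}) := by
        letI := galTopT κ pE a N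
        exact isClosed_closure
      exact keyClosed κ pE a hM hE hγ hV hInv N hN hNdcl
        (@closure _ (galTopT κ pE a N) {projT κ pE a 1}) hclosed σ hcnt ι' hι' c'
  · intro σ
    constructor
    · intro hσ ι' hc c'
      haveI := hc
      exact hσ ι' (countable_lt_kappa κ hM.1 ι') c'
    · intro hcnt ι' hι' c'
      have hclosed : @IsClosed _ (galTopT κ pE a N)
          (@connectedComponent _ (galTopT κ pE a N) (projT κ pE a 1)) := by
        letI := galTopT κ pE a N
        exact isClosed_connectedComponent
      exact keyClosed κ pE a hM hE hγ hV hInv N hN hNdcl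
        (@connectedComponent _ (galTopT κ pE a N) (projT κ pE a 1)) hclosed σ hcnt ι' hι' c'

end Statements

end RelLascar
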